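/- arXiv:2407.10012 — 3 statements merged into one kernel-verified Lean document; each statement's English description precedes it below -/
import Mathlib

section
/- Let u : ℝ² → ℝ² be a continuously differentiable vector field with compact support. Then ‖u‖_{L⁴(ℝ²)} ≤ 2^{1/4}·‖u‖_{L²(ℝ²)}^{1/2}·‖∇u‖_{L²(ℝ²)}^{1/2}. -/
open MeasureTheory Finset
open scoped RealInnerProductSpace

noncomputable section
set_option maxHeartbeats 1000000

open MeasureTheory Finset
open scoped RealInnerProductSpace


-- slice of a compactly supported function on ℝ × ℝ has compact support
theorem lady_slice1 {f : ℝ × ℝ → ℝ} (hf : HasCompactSupport f) (b : ℝ) :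
    HasCompactSupport fun t => f (t, b) := by
  obtain ⟨R, hR⟩ := hf.isBounded.subset_closedBall 0
  have hsub : (Function.support fun t => f (t, b)) ⊆ Metric.closedBall (0:ℝ) R := by
    intro t ht
    have : (t, b) ∈ tsupport f := subset_tsupport f ht
    have := hR this
    simp only [Metric.mem_closedBall, dist_zero_right] at this ⊢
    exact le_trans (le_max_left _ _) (by simpa [Prod.norm_def] using this)
  exact HasCompactSupport.intro (isCompact_closedBall 0 R) fun t ht => by
    by_contra h
    exact ht (hsub h)

theorem lady_slice2 {f : ℝ × ℝ → ℝ} (hf : HasCompactSupport f) (a : ℝ) :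
    HasCompactSupport fun t => f (a, t) := by
  obtain ⟨R, hR⟩ := hf.isBounded.subset_closedBall 0
  have hsub : (Function.support fun t => f (a, t)) ⊆ Metric.closedBall (0:ℝ) R := by
    intro t ht
    have : (a, t) ∈ tsupport f := subset_tsupport f ht
    have := hR this
    simp only [Metric.mem_closedBall, dist_zero_right] at this ⊢
    exact le_trans (le_max_right _ _) (by simpa [Prod.norm_def] using this)
  exact HasCompactSupport.intro (isCompact_closedBall 0 R) fun t ht => by
    by_contra h
    exact ht (hsub h)

-- FTC bound for one variable compactly supported C¹ functions
theorem lady_onevar {h h' : ℝ → ℝ} (hd : ∀ t, HasDerivAt h (h' t) t)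
    (hc' : Continuous h') (hs : HasCompactSupport h) (hs' : HasCompactSupport h')
    (a : ℝ) : h a ≤ ∫ t, |h' t| := by
  have hint : Integrable h' := hc'.integrable_of_hasCompactSupport hs'
  obtain ⟨R, hR⟩ := hs.isBounded.subset_closedBall 0
  have h0 : Filter.Tendsto h Filter.atBot (nhds 0) := by
    have hev : h =ᶠ[Filter.atBot] (fun _ => (0:ℝ)) := by
      filter_upwards [Filter.Iic_mem_atBot (-(R+1))] with x hx
      have hxn : x ∉ tsupport h := by
        intro hmem
        have := hR hmem
        simp only [Metric.mem_closedBall, dist_zero_right, Real.norm_eq_abs] at this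
        have : -(R+1) < -R := by linarith [abs_nonneg x]
        rw [Set.mem_Iic] at hx
        nlinarith [abs_le.mp (hR hmem |> fun h => by
          simpa [Real.dist_eq] using h) ]
      exact image_eq_zero_of_notMem_tsupport hxn
    exact Filter.Tendsto.congr' hev.symm tendsto_const_nhds
  have key : ∫ x in Set.Iic a, h' x = h a - 0 :=
    integral_Iic_of_hasDerivAt_of_tendsto' (fun x _ => hd x) hint.integrableOn h0
  rw [sub_zero] at key
  calc h a = ∫ x in Set.Iic a, h' x := key.symm
    _ ≤ ∫ x in Set.Iic a, |h' x| :=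
        integral_mono_ae hint.integrableOn hint.abs.integrableOn
          (Filter.Eventually.of_forall fun x => le_abs_self _)
    _ ≤ ∫ t, |h' t| := setIntegral_le_integral hint.abs
          (Filter.Eventually.of_forall fun x => abs_nonneg _)


theorem lady_CS {f g : ℝ × ℝ → ℝ} (hf : Continuous f) (hg : Continuous g)
    (hfs : HasCompactSupport f) (hgs : HasCompactSupport g)
    (hf0 : ∀ p, 0 ≤ f p) (hg0 : ∀ p, 0 ≤ g p) :
    ∫ p, f p * g p ≤ Real.sqrt (∫ p, f p ^ 2) * Real.sqrt (∫ p, g p ^ 2) := by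
  have hpq : Real.HolderConjugate 2 2 := Real.holderConjugate_iff.mpr ⟨one_lt_two, by norm_num⟩
  have hfm : MemLp f (ENNReal.ofReal 2) volume := by
    simpa using hf.memLp_of_hasCompactSupport (p := 2) hfs
  have hgm : MemLp g (ENNReal.ofReal 2) volume := by
    simpa using hg.memLp_of_hasCompactSupport (p := 2) hgs
  have h := integral_mul_le_Lp_mul_Lq_of_nonneg hpq
    (Filter.Eventually.of_forall hf0) (Filter.Eventually.of_forall hg0) hfm hgm
  simp only [Real.rpow_two] at h
  rw [Real.sqrt_eq_rpow, Real.sqrt_eq_rpow]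
  exact h

theorem lady_core_aux (v : ℝ × ℝ → EuclideanSpace ℝ (Fin 2))
    (hvc : Continuous v) (hvs : HasCompactSupport v)
    (d1 d2 : ℝ × ℝ → EuclideanSpace ℝ (Fin 2))
    (hd1c : Continuous d1) (hd2c : Continuous d2)
    (hd1s : HasCompactSupport d1) (hd2s : HasCompactSupport d2)
    (G1 G2 : ℝ × ℝ → ℝ)
    (hG1c : Continuous G1) (hG2c : Continuous G2)
    (hG1s : HasCompactSupport G1) (hG2s : HasCompactSupport G2)
    (hG1 : ∀ p, G1 p = 2 * ⟪v p, d1 p⟫) (hG2 : ∀ p, G2 p = 2 * ⟪v p, d2 p⟫)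
    (hgs : HasCompactSupport (fun p : ℝ × ℝ => ‖v p‖ ^ 2))
    (hder1 : ∀ b t, HasDerivAt (fun s => ‖v (s, b)‖ ^ 2) (G1 (t, b)) t)
    (hder2 : ∀ a t, HasDerivAt (fun s => ‖v (a, s)‖ ^ 2) (G2 (a, t)) t) :
    ∫ p, ‖v p‖ ^ 4 ≤ 2 * (∫ p, ‖v p‖ ^ 2) * ∫ p, (‖d1 p‖ ^ 2 + ‖d2 p‖ ^ 2) := by

  have vol : (volume : Measure (ℝ × ℝ)) = (volume : Measure ℝ).prod volume :=
    Measure.volume_eq_prod ℝ ℝ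
  set A1 : ℝ → ℝ := fun b => ∫ t, |G1 (t, b)| with hA1
  set A2 : ℝ → ℝ := fun a => ∫ t, |G2 (a, t)| with hA2
  have habs1 : Integrable (fun p : ℝ × ℝ => |G1 p|) :=
    hG1c.abs.integrable_of_hasCompactSupport hG1s.abs
  have habs2 : Integrable (fun p : ℝ × ℝ => |G2 p|) :=
    hG2c.abs.integrable_of_hasCompactSupport hG2s.abs
  have habs1' : Integrable (fun p : ℝ × ℝ => |G1 p|) ((volume : Measure ℝ).prod volume) :=
    by rw [← vol]; exact habs1
  have habs2' : Integrable (fun p : ℝ × ℝ => |G2 p|) ((volume : Measure ℝ).prod volume) :=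
    by rw [← vol]; exact habs2
  have hA1i : Integrable A1 := habs1'.integral_prod_right
  have hA2i : Integrable A2 := habs2'.integral_prod_left
  have hpt : ∀ p : ℝ × ℝ, ‖v p‖ ^ 4 ≤ A2 p.1 * A1 p.2 := by
    intro p
    have b1 : ‖v p‖ ^ 2 ≤ A1 p.2 := by
      simpa using lady_onevar (h := fun s => ‖v (s, p.2)‖ ^ 2) (h' := fun t => G1 (t, p.2))
        (fun t => hder1 p.2 t)
        (hG1c.comp (continuous_id.prodMk continuous_const))
        (lady_slice1 hgs p.2) (lady_slice1 hG1s p.2) p.1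
    have b2 : ‖v p‖ ^ 2 ≤ A2 p.1 := by
      simpa using lady_onevar (h := fun s => ‖v (p.1, s)‖ ^ 2) (h' := fun t => G2 (p.1, t))
        (fun t => hder2 p.1 t)
        (hG2c.comp (continuous_const.prodMk continuous_id))
        (lady_slice2 hgs p.1) (lady_slice2 hG2s p.1) p.2
    have h0 : (0:ℝ) ≤ ‖v p‖ ^ 2 := sq_nonneg _
    calc ‖v p‖ ^ 4 = ‖v p‖ ^ 2 * ‖v p‖ ^ 2 := by ring
      _ ≤ A2 p.1 * A1 p.2 := mul_le_mul b2 b1 h0 (le_trans h0 b2)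
  have hint4 : Integrable (fun p : ℝ × ℝ => ‖v p‖ ^ 4) := by
    have hc : Continuous (fun p : ℝ × ℝ => ‖v p‖ ^ 4) := hvc.norm.pow 4
    have h4 : HasCompactSupport (fun p : ℝ × ℝ => ‖v p‖ ^ 4) :=
      hvs.comp_left (g := fun y => ‖y‖ ^ 4) (by simp)
    exact hc.integrable_of_hasCompactSupport h4
  have hprodint : Integrable (fun p : ℝ × ℝ => A2 p.1 * A1 p.2) := by
    rw [vol]; exact hA2i.mul_prod hA1i
  have step1 : ∫ p, ‖v p‖ ^ 4 ≤ (∫ a, A2 a) * (∫ b, A1 b) := by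
    calc ∫ p, ‖v p‖ ^ 4 ≤ ∫ p, A2 p.1 * A1 p.2 := integral_mono hint4 hprodint hpt
      _ = (∫ a, A2 a) * (∫ b, A1 b) := by rw [vol]; exact integral_prod_mul A2 A1
  have step2 : ∫ b, A1 b = ∫ p, |G1 p| := by
    calc (∫ b, A1 b) = ∫ z : ℝ × ℝ, |G1 (z.2, z.1)| ∂((volume : Measure ℝ).prod volume) :=
          integral_integral (f := fun b t => |G1 (t, b)|) habs1'.swap
      _ = ∫ z, |G1 z| ∂((volume : Measure ℝ).prod volume) :=
          integral_prod_swap fun z => |G1 z|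
      _ = ∫ z, |G1 z| := by rw [← vol]
  have step2' : ∫ a, A2 a = ∫ p, |G2 p| := by
    calc (∫ a, A2 a) = ∫ z : ℝ × ℝ, |G2 (z.1, z.2)| ∂((volume : Measure ℝ).prod volume) :=
          integral_integral (f := fun a t => |G2 (a, t)|) habs2'
      _ = ∫ z, |G2 z| := by rw [← vol]
  set Y := ∫ p : ℝ × ℝ, ‖v p‖ ^ 2 with hYdef
  set Z1 := ∫ p : ℝ × ℝ, ‖d1 p‖ ^ 2 with hZ1def
  set Z2 := ∫ p : ℝ × ℝ, ‖d2 p‖ ^ 2 with hZ2def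
  have hmul1int : Integrable (fun p : ℝ × ℝ => ‖v p‖ * ‖d1 p‖) :=
    (hvc.norm.mul hd1c.norm).integrable_of_hasCompactSupport hvs.norm.mul_right
  have hmul2int : Integrable (fun p : ℝ × ℝ => ‖v p‖ * ‖d2 p‖) :=
    (hvc.norm.mul hd2c.norm).integrable_of_hasCompactSupport hvs.norm.mul_right
  have step3 : ∫ p, |G1 p| ≤ 2 * (Real.sqrt Y * Real.sqrt Z1) := by
    have hb : ∀ p, |G1 p| ≤ 2 * (‖v p‖ * ‖d1 p‖) := by
      intro p
      rw [hG1 p, abs_mul, abs_two]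
      have := abs_real_inner_le_norm (v p) (d1 p)
      nlinarith [abs_nonneg (⟪v p, d1 p⟫)]
    have hcs := lady_CS hvc.norm hd1c.norm hvs.norm hd1s.norm
      (fun p => norm_nonneg _) (fun p => norm_nonneg _)
    calc ∫ p, |G1 p| ≤ ∫ p, 2 * (‖v p‖ * ‖d1 p‖) :=
          integral_mono habs1 (hmul1int.const_mul 2) hb
      _ = 2 * ∫ p, ‖v p‖ * ‖d1 p‖ := integral_const_mul 2 _
      _ ≤ 2 * (Real.sqrt Y * Real.sqrt Z1) := by
          have h2 : (∫ p, ‖v p‖ ^ 2) = Y := rfl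
          have h3 : (∫ p, ‖d1 p‖ ^ 2) = Z1 := rfl
          rw [h2, h3] at hcs
          linarith
  have step4 : ∫ p, |G2 p| ≤ 2 * (Real.sqrt Y * Real.sqrt Z2) := by
    have hb : ∀ p, |G2 p| ≤ 2 * (‖v p‖ * ‖d2 p‖) := by
      intro p
      rw [hG2 p, abs_mul, abs_two]
      have := abs_real_inner_le_norm (v p) (d2 p)
      nlinarith [abs_nonneg (⟪v p, d2 p⟫)]
    have hcs := lady_CS hvc.norm hd2c.norm hvs.norm hd2s.norm
      (fun p => norm_nonneg _) (fun p => norm_nonneg _)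
    calc ∫ p, |G2 p| ≤ ∫ p, 2 * (‖v p‖ * ‖d2 p‖) :=
          integral_mono habs2 (hmul2int.const_mul 2) hb
      _ = 2 * ∫ p, ‖v p‖ * ‖d2 p‖ := integral_const_mul 2 _
      _ ≤ 2 * (Real.sqrt Y * Real.sqrt Z2) := by
          have h2 : (∫ p, ‖v p‖ ^ 2) = Y := rfl
          have h3 : (∫ p, ‖d2 p‖ ^ 2) = Z2 := rfl
          rw [h2, h3] at hcs
          linarith
  have hZint1 : Integrable (fun p : ℝ × ℝ => ‖d1 p‖ ^ 2) := by
    have hc : Continuous (fun p : ℝ × ℝ => ‖d1 p‖ ^ 2) := hd1c.norm.pow 2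
    have h4 : HasCompactSupport (fun p : ℝ × ℝ => ‖d1 p‖ ^ 2) :=
      hd1s.comp_left (g := fun y => ‖y‖ ^ 2) (by simp)
    exact hc.integrable_of_hasCompactSupport h4
  have hZint2 : Integrable (fun p : ℝ × ℝ => ‖d2 p‖ ^ 2) := by
    have hc : Continuous (fun p : ℝ × ℝ => ‖d2 p‖ ^ 2) := hd2c.norm.pow 2
    have h4 : HasCompactSupport (fun p : ℝ × ℝ => ‖d2 p‖ ^ 2) :=
      hd2s.comp_left (g := fun y => ‖y‖ ^ 2) (by simp)
    exact hc.integrable_of_hasCompactSupport h4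
  have hsum : ∫ p, (‖d1 p‖ ^ 2 + ‖d2 p‖ ^ 2) = Z1 + Z2 := integral_add hZint1 hZint2
  rw [hsum]
  have hYnn : 0 ≤ Y := integral_nonneg fun p => sq_nonneg _
  have hZ1nn : 0 ≤ Z1 := integral_nonneg fun p => sq_nonneg _
  have hZ2nn : 0 ≤ Z2 := integral_nonneg fun p => sq_nonneg _
  have hP1nn : 0 ≤ ∫ p, |G1 p| := integral_nonneg fun p => abs_nonneg _
  have hchain : ∫ p, ‖v p‖ ^ 4 ≤ (2 * (Real.sqrt Y * Real.sqrt Z2)) *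
      (2 * (Real.sqrt Y * Real.sqrt Z1)) := by
    refine step1.trans ?_
    rw [step2, step2']
    exact mul_le_mul step4 step3 hP1nn (by positivity)
  nlinarith [Real.sq_sqrt hYnn, Real.sq_sqrt hZ1nn, Real.sq_sqrt hZ2nn,
    Real.sqrt_nonneg Y, Real.sqrt_nonneg Z1, Real.sqrt_nonneg Z2,
    sq_nonneg (Real.sqrt Z1 - Real.sqrt Z2), hchain,
    mul_nonneg hYnn (sq_nonneg (Real.sqrt Z1 - Real.sqrt Z2))]



theorem lady_core (v : ℝ × ℝ → EuclideanSpace ℝ (Fin 2)) (hv : ContDiff ℝ 1 v)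
    (hvs : HasCompactSupport v) :
    ∫ p, ‖v p‖ ^ 4 ≤ 2 * (∫ p, ‖v p‖ ^ 2) *
      ∫ p, (‖fderiv ℝ v p ((1:ℝ), (0:ℝ))‖ ^ 2 + ‖fderiv ℝ v p ((0:ℝ), (1:ℝ))‖ ^ 2) := by
  have hvd : Differentiable ℝ v := hv.differentiable one_ne_zero
  have hvc : Continuous v := hv.continuous
  have hfc : Continuous (fderiv ℝ v) := hv.continuous_fderiv one_ne_zero
  set d1 : ℝ × ℝ → EuclideanSpace ℝ (Fin 2) := fun p => fderiv ℝ v p ((1:ℝ), (0:ℝ)) with hd1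
  set d2 : ℝ × ℝ → EuclideanSpace ℝ (Fin 2) := fun p => fderiv ℝ v p ((0:ℝ), (1:ℝ)) with hd2
  have hd1c : Continuous d1 := hfc.clm_apply continuous_const
  have hd2c : Continuous d2 := hfc.clm_apply continuous_const
  have hd1s : HasCompactSupport d1 :=
    (hvs.fderiv ℝ).comp_left (g := fun L : (ℝ × ℝ) →L[ℝ] EuclideanSpace ℝ (Fin 2) =>
      L ((1:ℝ), (0:ℝ))) (by simp)
  have hd2s : HasCompactSupport d2 :=
    (hvs.fderiv ℝ).comp_left (g := fun L : (ℝ × ℝ) →L[ℝ] EuclideanSpace ℝ (Fin 2) =>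
      L ((0:ℝ), (1:ℝ))) (by simp)
  set G1 : ℝ × ℝ → ℝ := fun p => 2 * ⟪v p, d1 p⟫ with hG1
  set G2 : ℝ × ℝ → ℝ := fun p => 2 * ⟪v p, d2 p⟫ with hG2
  have hG1c : Continuous G1 := continuous_const.mul (hvc.inner hd1c)
  have hG2c : Continuous G2 := continuous_const.mul (hvc.inner hd2c)
  have hG1s : HasCompactSupport G1 := hvs.mono' (by
    intro p hp
    by_contra h
    have h0 : v p = 0 := image_eq_zero_of_notMem_tsupport h
    simp [hG1, h0] at hp)
  have hG2s : HasCompactSupport G2 := hvs.mono' (by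
    intro p hp
    by_contra h
    have h0 : v p = 0 := image_eq_zero_of_notMem_tsupport h
    simp [hG2, h0] at hp)
  have hgs : HasCompactSupport (fun p => ‖v p‖ ^ 2) :=
    hvs.comp_left (g := fun y : EuclideanSpace ℝ (Fin 2) => ‖y‖ ^ 2) (by simp)
  -- derivative computations
  have hder1 : ∀ b t, HasDerivAt (fun s => ‖v (s, b)‖ ^ 2) (G1 (t, b)) t := by
    intro b t
    have h1 : HasDerivAt (fun s : ℝ => (s, b)) ((1:ℝ), (0:ℝ)) t :=
      (hasDerivAt_id t).prodMk (hasDerivAt_const t b)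
    have h2 : HasDerivAt (fun s => v (s, b)) (d1 (t, b)) t :=
      (hvd (t, b)).hasFDerivAt.comp_hasDerivAt t h1
    have h3 := h2.inner ℝ h2
    have : ⟪v (t, b), d1 (t, b)⟫ + ⟪d1 (t, b), v (t, b)⟫ = G1 (t, b) := by
      rw [real_inner_comm (v (t,b))]; simp [hG1]; ring
    rw [this] at h3
    convert h3 using 2 with s
    · rfl
    · rfl
    rw [← real_inner_self_eq_norm_sq]
  have hder2 : ∀ a t, HasDerivAt (fun s => ‖v (a, s)‖ ^ 2) (G2 (a, t)) t := by
    intro a t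
    have h1 : HasDerivAt (fun s : ℝ => (a, s)) ((0:ℝ), (1:ℝ)) t :=
      (hasDerivAt_const t a).prodMk (hasDerivAt_id t)
    have h2 : HasDerivAt (fun s => v (a, s)) (d2 (a, t)) t :=
      (hvd (a, t)).hasFDerivAt.comp_hasDerivAt t h1
    have h3 := h2.inner ℝ h2
    have : ⟪v (a, t), d2 (a, t)⟫ + ⟪d2 (a, t), v (a, t)⟫ = G2 (a, t) := by
      rw [real_inner_comm (v (a,t))]; simp [hG2]; ring
    rw [this] at h3
    convert h3 using 2 with s
    · rfl
    · rfl
    rw [← real_inner_self_eq_norm_sq]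
  exact lady_core_aux v hvc hvs d1 d2 hd1c hd2c hd1s hd2s G1 G2 hG1c hG2c hG1s hG2s
    (fun p => rfl) (fun p => rfl) hgs hder1 hder2

def ladyPhi : (ℝ × ℝ) ≃L[ℝ] EuclideanSpace ℝ (Fin 2) :=
  (ContinuousLinearEquiv.finTwoArrow ℝ ℝ).symm.trans
    (EuclideanSpace.equiv (Fin 2) ℝ).symm

theorem ladyPhi_mp : MeasurePreserving ladyPhi (volume : Measure (ℝ × ℝ)) volume := by
  have h1 : MeasurePreserving (MeasurableEquiv.finTwoArrow (α := ℝ)).symm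
      (volume : Measure (ℝ × ℝ)) volume := (volume_preserving_finTwoArrow ℝ).symm
  have h2 : MeasurePreserving (MeasurableEquiv.toLp 2 (Fin 2 → ℝ))
      (volume : Measure (Fin 2 → ℝ)) volume :=
    (EuclideanSpace.volume_preserving_symm_measurableEquiv_toLp (Fin 2)).symm
  have : ⇑ladyPhi = (MeasurableEquiv.toLp 2 (Fin 2 → ℝ)) ∘
      (MeasurableEquiv.finTwoArrow (α := ℝ)).symm := rfl
  exact this ▸ (h2.comp h1)

theorem lady_integral_comp (f : EuclideanSpace ℝ (Fin 2) → ℝ) :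
    ∫ x, f x = ∫ p : ℝ × ℝ, f (ladyPhi p) :=
  (ladyPhi_mp.integral_comp ladyPhi.toHomeomorph.measurableEmbedding f).symm

theorem ladyPhi_e1 : ladyPhi ((1:ℝ), (0:ℝ)) = EuclideanSpace.single 0 (1:ℝ) := by
  ext i
  fin_cases i <;> simp [ladyPhi, EuclideanSpace.single_apply]

theorem ladyPhi_e2 : ladyPhi ((0:ℝ), (1:ℝ)) = EuclideanSpace.single 1 (1:ℝ) := by
  ext i
  fin_cases i <;> simp [ladyPhi, EuclideanSpace.single_apply]

theorem lady_norm_sq (w : EuclideanSpace ℝ (Fin 2)) : ∑ k, (w k) ^ 2 = ‖w‖ ^ 2 := by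
  rw [EuclideanSpace.norm_eq, Real.sq_sqrt (by positivity)]
  simp [sq_abs]


end

open MeasureTheory Finset in
/-- Ladyzhenskaya's two-dimensional interpolation inequality with explicit
constant: `‖u‖_{L⁴(ℝ²)} ≤ 2^{1/4}·‖u‖_{L²}^{1/2}·‖∇u‖_{L²}^{1/2}` for compactly
supported `C¹` vector fields on `ℝ²`, where `‖∇u‖_{L²}` is the `L²` norm of the
full (Frobenius) gradient. -/
theorem ladyzhenskaya_L4_dim2
    (u : EuclideanSpace ℝ (Fin 2) → EuclideanSpace ℝ (Fin 2))
    (hu : ContDiff ℝ 1 u) (hus : HasCompactSupport u) :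
    (∫ x, ‖u x‖ ^ 4) ^ ((1 : ℝ) / 4) ≤
      (2 : ℝ) ^ ((1 : ℝ) / 4) *
        ((∫ x, ‖u x‖ ^ 2) ^ ((1 : ℝ) / 2)) ^ ((1 : ℝ) / 2) *
        ((∫ x, ∑ i, ∑ k, (fderiv ℝ u x (EuclideanSpace.single i (1 : ℝ)) k) ^ 2) ^
            ((1 : ℝ) / 2)) ^ ((1 : ℝ) / 2) := by
  set v : ℝ × ℝ → EuclideanSpace ℝ (Fin 2) := fun p => u (ladyPhi p) with hvdef
  have hv : ContDiff ℝ 1 v := hu.comp ladyPhi.contDiff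
  have hvs : HasCompactSupport v :=
    hus.comp_isClosedEmbedding ladyPhi.toHomeomorph.isClosedEmbedding
  have hder : ∀ (p : ℝ × ℝ) (w : ℝ × ℝ),
      fderiv ℝ v p w = fderiv ℝ u (ladyPhi p) (ladyPhi w) := by
    intro p w
    have h : fderiv ℝ v p = (fderiv ℝ u (ladyPhi p)).comp
        (ladyPhi : (ℝ × ℝ) →L[ℝ] EuclideanSpace ℝ (Fin 2)) := by
      have hcomp := fderiv_comp (𝕜 := ℝ) p (hu.differentiable one_ne_zero (ladyPhi p))
        ladyPhi.differentiableAt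
      rw [hvdef]
      rw [show (fun q => u (ladyPhi q)) = u ∘ ladyPhi from rfl, hcomp, ladyPhi.fderiv]
    rw [h]; rfl
  have hX : (∫ x, ‖u x‖ ^ 4) = ∫ p, ‖v p‖ ^ 4 :=
    lady_integral_comp (fun x => ‖u x‖ ^ 4)
  have hY : (∫ x, ‖u x‖ ^ 2) = ∫ p, ‖v p‖ ^ 2 :=
    lady_integral_comp (fun x => ‖u x‖ ^ 2)
  have hZ : (∫ x, ∑ i, ∑ k, (fderiv ℝ u x (EuclideanSpace.single i (1 : ℝ)) k) ^ 2)
      = ∫ p : ℝ × ℝ,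
        (‖fderiv ℝ v p ((1:ℝ), (0:ℝ))‖ ^ 2 + ‖fderiv ℝ v p ((0:ℝ), (1:ℝ))‖ ^ 2) := by
    have h1 : ∀ x : EuclideanSpace ℝ (Fin 2),
        (∑ i, ∑ k, (fderiv ℝ u x (EuclideanSpace.single i (1 : ℝ)) k) ^ 2)
        = ‖fderiv ℝ u x (EuclideanSpace.single 0 (1:ℝ))‖ ^ 2 +
          ‖fderiv ℝ u x (EuclideanSpace.single 1 (1:ℝ))‖ ^ 2 := by
      intro x
      rw [Fin.sum_univ_two, lady_norm_sq, lady_norm_sq]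
    simp_rw [h1]
    rw [lady_integral_comp (fun x => ‖fderiv ℝ u x (EuclideanSpace.single 0 (1:ℝ))‖ ^ 2 +
      ‖fderiv ℝ u x (EuclideanSpace.single 1 (1:ℝ))‖ ^ 2)]
    congr 1
    funext p
    rw [← ladyPhi_e1, ← ladyPhi_e2, ← hder p ((1:ℝ), (0:ℝ)), ← hder p ((0:ℝ), (1:ℝ))]
  have hcore := lady_core v hv hvs
  rw [← hX, ← hY, ← hZ] at hcore
  set X := ∫ x, ‖u x‖ ^ 4 with hXdef
  set Y := ∫ x, ‖u x‖ ^ 2 with hYdef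
  set Z := ∫ x, ∑ i, ∑ k, (fderiv ℝ u x (EuclideanSpace.single i (1 : ℝ)) k) ^ 2 with hZdef
  have hXnn : 0 ≤ X := integral_nonneg fun x => by positivity
  have hYnn : 0 ≤ Y := integral_nonneg fun x => by positivity
  have hZnn : 0 ≤ Z := integral_nonneg fun x => by positivity
  have e1 : (Y ^ ((1:ℝ)/2)) ^ ((1:ℝ)/2) = Y ^ ((1:ℝ)/4) := by
    rw [← Real.rpow_mul hYnn]; norm_num
  have e2 : (Z ^ ((1:ℝ)/2)) ^ ((1:ℝ)/2) = Z ^ ((1:ℝ)/4) := by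
    rw [← Real.rpow_mul hZnn]; norm_num
  rw [e1, e2]
  calc X ^ ((1:ℝ)/4) ≤ (2 * Y * Z) ^ ((1:ℝ)/4) :=
        Real.rpow_le_rpow hXnn hcore (by norm_num)
    _ = (2:ℝ) ^ ((1:ℝ)/4) * Y ^ ((1:ℝ)/4) * Z ^ ((1:ℝ)/4) := by
        rw [Real.mul_rpow (by positivity) hZnn, Real.mul_rpow (by norm_num) hYnn]
end

section
/- Let u : ℝ³ → ℝ³ be a continuously differentiable vector field with compact support. Then ‖u‖_{L⁴(ℝ³)} ≤ (4/(3√3))·‖u‖_{L²(ℝ³)}^{1/4}·‖∇u‖_{L²(ℝ³)}^{3/4}. -/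
open MeasureTheory Finset

open Set Filter ENNReal

local notation "E3" => EuclideanSpace ℝ (Fin 3)

section LadyzhenskayaAux


lemma two_mul_le_integral_abs_deriv {φ φ' : ℝ → ℝ}
    (hd : ∀ t, HasDerivAt φ (φ' t) t) (hc : Continuous φ')
    (hs : HasCompactSupport φ) (s : ℝ) :
    2 * φ s ≤ ∫ t, |φ' t| := by
  have hsupp : Function.support φ' ⊆ tsupport φ := by
    intro t ht
    by_contra h
    have h0 : φ =ᶠ[nhds t] 0 := notMem_tsupport_iff_eventuallyEq.mp h
    have : HasDerivAt φ 0 t := (hasDerivAt_const t (0 : ℝ)).congr_of_eventuallyEq h0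
    exact ht ((hd t).unique this)
  have hs' : HasCompactSupport φ' := hs.mono' hsupp
  have hint : Integrable φ' := hc.integrable_of_hasCompactSupport hs'
  have hintabs : Integrable (fun t => |φ' t|) := hint.abs
  have h3 := hasCompactSupport_iff_eventuallyEq.mp hs
  rw [Filter.coclosedCompact_eq_cocompact] at h3
  have hbot : Filter.Tendsto φ atBot (nhds 0) :=
    (h3.filter_mono _root_.atBot_le_cocompact).tendsto
  have htop : Filter.Tendsto φ atTop (nhds 0) :=
    (h3.filter_mono _root_.atTop_le_cocompact).tendsto
  have hIic : ∫ t in Iic s, φ' t = φ s := by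
    rw [integral_Iic_of_hasDerivAt_of_tendsto' (fun x _ => hd x) hint.integrableOn hbot]
    ring
  have hIoi : ∫ t in Ioi s, φ' t = - φ s := by
    rw [integral_Ioi_of_hasDerivAt_of_tendsto' (fun x _ => hd x) hint.integrableOn htop]
    ring
  have h1 : φ s ≤ ∫ t in Iic s, |φ' t| := by
    rw [← hIic]
    exact integral_mono hint.integrableOn hintabs.integrableOn (fun t => le_abs_self _)
  have h2 : φ s ≤ ∫ t in Ioi s, |φ' t| := by
    have heq : φ s = ∫ t in Ioi s, -φ' t := by rw [integral_neg, hIoi]; ring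
    rw [heq]
    exact integral_mono hint.neg.integrableOn hintabs.integrableOn (fun t => neg_le_abs _)
  have hsplit : (∫ t in Iic s, |φ' t|) + (∫ t in Ioi s, |φ' t|) = ∫ t, |φ' t| := by
    rw [← compl_Iic]
    exact integral_add_compl measurableSet_Iic hintabs
  linarith


lemma lint_CS {α : Type*} [MeasurableSpace α] (μ : Measure α) {f g : α → ℝ≥0∞}
    (hf : AEMeasurable f μ) (hg : AEMeasurable g μ) :
    ∫⁻ a, f a * g a ∂μ ≤
      (∫⁻ a, f a ^ (2:ℝ) ∂μ) ^ ((1:ℝ)/2) * (∫⁻ a, g a ^ (2:ℝ) ∂μ) ^ ((1:ℝ)/2) := by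
  have hpq : Real.HolderConjugate 2 2 := Real.HolderConjugate.two_two
  simpa using ENNReal.lintegral_mul_le_Lp_mul_Lq μ hpq hf hg

lemma sq_le_of_le_sqrt_mul_sqrt {a b c : ℝ≥0∞} (h : a ≤ b ^ ((1:ℝ)/2) * c ^ ((1:ℝ)/2)) :
    a ^ (2:ℝ) ≤ b * c := by
  calc a ^ (2:ℝ) ≤ (b ^ ((1:ℝ)/2) * c ^ ((1:ℝ)/2)) ^ (2:ℝ) :=
        ENNReal.rpow_le_rpow h (by norm_num)
    _ = b * c := by
        rw [ENNReal.mul_rpow_of_nonneg _ _ (by norm_num : (0:ℝ) ≤ 2),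
          ← ENNReal.rpow_mul, ← ENNReal.rpow_mul]
        norm_num

lemma key3 {f g₁ g₂ g₃ : ℝ × ℝ × ℝ → ℝ≥0∞}
    (hf : Measurable f) (hg₁ : Measurable g₁) (hg₂ : Measurable g₂) (hg₃ : Measurable g₃)
    (h1 : ∀ x y z : ℝ, f (x, y, z) ^ (2:ℝ) ≤ ∫⁻ t, f (t, y, z) * g₁ (t, y, z))
    (h2 : ∀ x y z : ℝ, f (x, y, z) ^ (2:ℝ) ≤ ∫⁻ t, f (x, t, z) * g₂ (x, t, z))
    (h3 : ∀ x y z : ℝ, f (x, y, z) ^ (2:ℝ) ≤ ∫⁻ t, f (x, y, t) * g₃ (x, y, t)) :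
    ∫⁻ p, f p ^ (4:ℝ) ≤
      (∫⁻ p, f p ^ (2:ℝ)) ^ ((1:ℝ)/2) * (∫⁻ p, g₁ p ^ (2:ℝ)) ^ ((1:ℝ)/2) *
        (∫⁻ p, g₂ p ^ (2:ℝ)) ^ ((1:ℝ)/2) * (∫⁻ p, g₃ p ^ (2:ℝ)) ^ ((1:ℝ)/2) := by
  have m1 : ∀ x : ℝ, Measurable (fun q : ℝ × ℝ => f (x, q)) :=
    fun x => hf.comp measurable_prodMk_left
  have m2 : ∀ x : ℝ, Measurable (fun q : ℝ × ℝ => g₂ (x, q)) :=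
    fun x => hg₂.comp measurable_prodMk_left
  have m3 : ∀ x : ℝ, Measurable (fun q : ℝ × ℝ => g₃ (x, q)) :=
    fun x => hg₃.comp measurable_prodMk_left
  set I₂ : ℝ → ℝ≥0∞ := fun x => ∫⁻ q : ℝ × ℝ, f (x, q) * g₂ (x, q) with hI₂
  set I₃ : ℝ → ℝ≥0∞ := fun x => ∫⁻ q : ℝ × ℝ, f (x, q) * g₃ (x, q) with hI₃
  set S : ℝ → ℝ≥0∞ := fun x => ∫⁻ q : ℝ × ℝ, f (x, q) ^ (2:ℝ) with hS
  set G₂ : ℝ → ℝ≥0∞ := fun x => ∫⁻ q : ℝ × ℝ, g₂ (x, q) ^ (2:ℝ) with hG₂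
  set G₃ : ℝ → ℝ≥0∞ := fun x => ∫⁻ q : ℝ × ℝ, g₃ (x, q) ^ (2:ℝ) with hG₃
  set K : ℝ≥0∞ := ∫⁻ p, f p * g₁ p with hK
  set A : ℝ≥0∞ := ∫⁻ p, f p ^ (2:ℝ) with hA
  set B₁ : ℝ≥0∞ := ∫⁻ p, g₁ p ^ (2:ℝ) with hB₁
  set B₂ : ℝ≥0∞ := ∫⁻ p, g₂ p ^ (2:ℝ) with hB₂
  set B₃ : ℝ≥0∞ := ∫⁻ p, g₃ p ^ (2:ℝ) with hB₃
  have mI₂ : Measurable I₂ := Measurable.lintegral_prod_right' (hf.mul hg₂)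
  have mI₃ : Measurable I₃ := Measurable.lintegral_prod_right' (hf.mul hg₃)
  have mG₂ : Measurable G₂ := Measurable.lintegral_prod_right' ((hg₂.pow_const _))
  have mG₃ : Measurable G₃ := Measurable.lintegral_prod_right' ((hg₃.pow_const _))
  -- basic Fubini identities
  have eqI₂ : ∀ x : ℝ, I₂ x = ∫⁻ z : ℝ, ∫⁻ t : ℝ, f (x, t, z) * g₂ (x, t, z) := by
    intro x
    rw [hI₂]; simp only
    rw [Measure.volume_eq_prod, lintegral_prod (fun q => f (x, q) * g₂ (x, q)) ((m1 x).mul (m2 x)).aemeasurable]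
    exact lintegral_lintegral_swap ((m1 x).mul (m2 x)).aemeasurable
  have eqI₃ : ∀ x : ℝ, I₃ x = ∫⁻ y : ℝ, ∫⁻ t : ℝ, f (x, y, t) * g₃ (x, y, t) := by
    intro x
    rw [hI₃]; simp only
    rw [Measure.volume_eq_prod, lintegral_prod (fun q => f (x, q) * g₃ (x, q)) ((m1 x).mul (m3 x)).aemeasurable]
  have eqB₂ : B₂ = ∫⁻ x : ℝ, G₂ x := by
    rw [hB₂, Measure.volume_eq_prod, lintegral_prod _ (hg₂.pow_const _).aemeasurable]
  have eqB₃ : B₃ = ∫⁻ x : ℝ, G₃ x := by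
    rw [hB₃, Measure.volume_eq_prod, lintegral_prod _ (hg₃.pow_const _).aemeasurable]
  have eqK : K = ∫⁻ t : ℝ, ∫⁻ q : ℝ × ℝ, f (t, q) * g₁ (t, q) := by
    rw [hK, Measure.volume_eq_prod, lintegral_prod (fun p => f p * g₁ p) (hf.mul hg₁).aemeasurable]
  have eq4 : (∫⁻ p, f p ^ (4:ℝ)) = ∫⁻ x : ℝ, ∫⁻ q : ℝ × ℝ, f (x, q) ^ (4:ℝ) := by
    rw [Measure.volume_eq_prod, lintegral_prod _ (hf.pow_const _).aemeasurable]
  -- Step A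
  have stepA : ∀ x : ℝ, (∫⁻ q : ℝ × ℝ, f (x, q) ^ (4:ℝ)) ≤ I₂ x * I₃ x := by
    intro x
    have hJ₂ : Measurable fun z : ℝ => ∫⁻ t : ℝ, f (x, t, z) * g₂ (x, t, z) :=
      Measurable.lintegral_prod_left' ((m1 x).mul (m2 x))
    have hJ₃ : Measurable fun y : ℝ => ∫⁻ t : ℝ, f (x, y, t) * g₃ (x, y, t) :=
      Measurable.lintegral_prod_right' ((m1 x).mul (m3 x))
    calc (∫⁻ q : ℝ × ℝ, f (x, q) ^ (4:ℝ))
        = ∫⁻ y : ℝ, ∫⁻ z : ℝ, f (x, y, z) ^ (4:ℝ) := by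
          rw [Measure.volume_eq_prod, lintegral_prod _ ((m1 x).pow_const _).aemeasurable]
      _ ≤ ∫⁻ y : ℝ, ∫⁻ z : ℝ,
            (∫⁻ t : ℝ, f (x, t, z) * g₂ (x, t, z)) *
              (∫⁻ t : ℝ, f (x, y, t) * g₃ (x, y, t)) := by
          refine lintegral_mono fun y => lintegral_mono fun z => ?_
          have he : f (x, y, z) ^ (4:ℝ) = f (x, y, z) ^ (2:ℝ) * f (x, y, z) ^ (2:ℝ) := by
            rw [← ENNReal.rpow_add_of_nonneg _ _ (by norm_num) (by norm_num)]
            norm_num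
          rw [he]
          exact mul_le_mul' (h2 x y z) (h3 x y z)
      _ = (∫⁻ z : ℝ, ∫⁻ t : ℝ, f (x, t, z) * g₂ (x, t, z)) *
            (∫⁻ y : ℝ, ∫⁻ t : ℝ, f (x, y, t) * g₃ (x, y, t)) := by
          have h' : ∀ y : ℝ, (∫⁻ z : ℝ,
              (∫⁻ t : ℝ, f (x, t, z) * g₂ (x, t, z)) *
                (∫⁻ t : ℝ, f (x, y, t) * g₃ (x, y, t))) =
              (∫⁻ z : ℝ, ∫⁻ t : ℝ, f (x, t, z) * g₂ (x, t, z)) *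
                (∫⁻ t : ℝ, f (x, y, t) * g₃ (x, y, t)) :=
            fun y => lintegral_mul_const _ hJ₂
          simp_rw [h']
          exact lintegral_const_mul _ hJ₃
      _ = I₂ x * I₃ x := by rw [eqI₂ x, eqI₃ x]
  -- S x ≤ K
  have hSK : ∀ x : ℝ, S x ≤ K := by
    intro x
    have hb : S x ≤ ∫⁻ q : ℝ × ℝ, ∫⁻ t : ℝ, f (t, q) * g₁ (t, q) := by
      refine lintegral_mono fun q => ?_
      obtain ⟨y, z⟩ := q
      exact h1 x y z
    refine hb.trans (le_of_eq ?_)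
    rw [eqK]
    exact lintegral_lintegral_swap (((hf.mul hg₁).comp measurable_swap).aemeasurable)
  -- bound ∫ I_i ^ 2
  have hI2sq : ∫⁻ x : ℝ, I₂ x ^ (2:ℝ) ≤ K * B₂ := by
    have hcs : ∀ x : ℝ, I₂ x ^ (2:ℝ) ≤ S x * G₂ x := fun x =>
      sq_le_of_le_sqrt_mul_sqrt (lint_CS _ (m1 x).aemeasurable (m2 x).aemeasurable)
    calc ∫⁻ x : ℝ, I₂ x ^ (2:ℝ) ≤ ∫⁻ x : ℝ, K * G₂ x :=
          lintegral_mono fun x => (hcs x).trans (mul_le_mul_left (hSK x) _)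
      _ = K * ∫⁻ x : ℝ, G₂ x := lintegral_const_mul _ mG₂
      _ = K * B₂ := by rw [eqB₂]
  have hI3sq : ∫⁻ x : ℝ, I₃ x ^ (2:ℝ) ≤ K * B₃ := by
    have hcs : ∀ x : ℝ, I₃ x ^ (2:ℝ) ≤ S x * G₃ x := fun x =>
      sq_le_of_le_sqrt_mul_sqrt (lint_CS _ (m1 x).aemeasurable (m3 x).aemeasurable)
    calc ∫⁻ x : ℝ, I₃ x ^ (2:ℝ) ≤ ∫⁻ x : ℝ, K * G₃ x :=
          lintegral_mono fun x => (hcs x).trans (mul_le_mul_left (hSK x) _)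
      _ = K * ∫⁻ x : ℝ, G₃ x := lintegral_const_mul _ mG₃
      _ = K * B₃ := by rw [eqB₃]
  have hKle : K ≤ A ^ ((1:ℝ)/2) * B₁ ^ ((1:ℝ)/2) := lint_CS _ hf.aemeasurable hg₁.aemeasurable
  -- main chain
  calc ∫⁻ p, f p ^ (4:ℝ)
      = ∫⁻ x : ℝ, ∫⁻ q : ℝ × ℝ, f (x, q) ^ (4:ℝ) := eq4
    _ ≤ ∫⁻ x : ℝ, I₂ x * I₃ x := lintegral_mono stepA
    _ ≤ (∫⁻ x : ℝ, I₂ x ^ (2:ℝ)) ^ ((1:ℝ)/2) * (∫⁻ x : ℝ, I₃ x ^ (2:ℝ)) ^ ((1:ℝ)/2) :=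
        lint_CS _ mI₂.aemeasurable mI₃.aemeasurable
    _ ≤ (K * B₂) ^ ((1:ℝ)/2) * (K * B₃) ^ ((1:ℝ)/2) :=
        mul_le_mul' (ENNReal.rpow_le_rpow hI2sq (by norm_num))
          (ENNReal.rpow_le_rpow hI3sq (by norm_num))
    _ = K * (B₂ ^ ((1:ℝ)/2) * B₃ ^ ((1:ℝ)/2)) := by
        rw [ENNReal.mul_rpow_of_nonneg _ _ (by norm_num : (0:ℝ) ≤ 1/2),
          ENNReal.mul_rpow_of_nonneg _ _ (by norm_num : (0:ℝ) ≤ 1/2)]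
        calc K ^ ((1:ℝ)/2) * B₂ ^ ((1:ℝ)/2) * (K ^ ((1:ℝ)/2) * B₃ ^ ((1:ℝ)/2))
            = (K ^ ((1:ℝ)/2) * K ^ ((1:ℝ)/2)) * (B₂ ^ ((1:ℝ)/2) * B₃ ^ ((1:ℝ)/2)) := by ring
          _ = K * (B₂ ^ ((1:ℝ)/2) * B₃ ^ ((1:ℝ)/2)) := by
              rw [← ENNReal.rpow_add_of_nonneg _ _ (by norm_num) (by norm_num)]
              norm_num
    _ ≤ (A ^ ((1:ℝ)/2) * B₁ ^ ((1:ℝ)/2)) * (B₂ ^ ((1:ℝ)/2) * B₃ ^ ((1:ℝ)/2)) :=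
        mul_le_mul_left hKle _
    _ = A ^ ((1:ℝ)/2) * B₁ ^ ((1:ℝ)/2) * B₂ ^ ((1:ℝ)/2) * B₃ ^ ((1:ℝ)/2) := by ring

noncomputable def PsiE : (ℝ × ℝ × ℝ) ≃ᵐ EuclideanSpace ℝ (Fin 3) :=
  ((MeasurableEquiv.refl ℝ).prodCongr (MeasurableEquiv.finTwoArrow).symm).trans
    ((MeasurableEquiv.piFinSuccAbove (fun _ : Fin 3 => ℝ) 0).symm.trans
      (MeasurableEquiv.toLp 2 (Fin 3 → ℝ)).symm.symm)

lemma PsiE_apply (p : ℝ × ℝ × ℝ) (j : Fin 3) :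
    PsiE p j = ![p.1, p.2.1, p.2.2] j := by
  obtain ⟨a, b, c⟩ := p
  fin_cases j <;> rfl

lemma psil0 (a b c : ℝ) :
    PsiE (a, b, c) = PsiE (0, b, c) + a • EuclideanSpace.single 0 (1:ℝ) := by
  refine PiLp.ext fun j => ?_
  have h1 := PsiE_apply (a, b, c) j
  have h2 := PsiE_apply (0, b, c) j
  rw [PiLp.add_apply, PiLp.smul_apply, h1, h2, EuclideanSpace.single_apply]
  fin_cases j <;> simp

lemma psil1 (a b c : ℝ) :
    PsiE (a, b, c) = PsiE (a, 0, c) + b • EuclideanSpace.single 1 (1:ℝ) := by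
  refine PiLp.ext fun j => ?_
  have h1 := PsiE_apply (a, b, c) j
  have h2 := PsiE_apply (a, 0, c) j
  rw [PiLp.add_apply, PiLp.smul_apply, h1, h2, EuclideanSpace.single_apply]
  fin_cases j <;> simp

lemma psil2 (a b c : ℝ) :
    PsiE (a, b, c) = PsiE (a, b, 0) + c • EuclideanSpace.single 2 (1:ℝ) := by
  refine PiLp.ext fun j => ?_
  have h1 := PsiE_apply (a, b, c) j
  have h2 := PsiE_apply (a, b, 0) j
  rw [PiLp.add_apply, PiLp.smul_apply, h1, h2, EuclideanSpace.single_apply]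
  fin_cases j <;> simp

lemma PsiE_mp : MeasurePreserving PsiE volume volume := by
  have h1 : MeasurePreserving ((MeasurableEquiv.refl ℝ).prodCongr
      (MeasurableEquiv.finTwoArrow (α := ℝ)).symm) volume volume := by
    have := (volume_preserving_finTwoArrow ℝ).symm
    exact (MeasurePreserving.id volume).prod this
  have h2 : MeasurePreserving
      (MeasurableEquiv.piFinSuccAbove (fun _ : Fin 3 => ℝ) 0).symm volume volume :=
    (volume_preserving_piFinSuccAbove (fun _ : Fin 3 => ℝ) 0).symm
  have h3 : MeasurePreserving
      (MeasurableEquiv.toLp 2 (Fin 3 → ℝ)).symm.symm volume volume :=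
    (EuclideanSpace.volume_preserving_symm_measurableEquiv_toLp (Fin 3)).symm
  exact (h3.comp h2).comp h1


lemma line_bound {u : E3 → E3} (hu : ContDiff ℝ 1 u) (hus : HasCompactSupport u)
    (i : Fin 3) (x₀ : E3) (s : ℝ) :
    ENNReal.ofReal (‖u (x₀ + s • EuclideanSpace.single i (1:ℝ))‖ ^ 2) ≤
      ∫⁻ t : ℝ, ENNReal.ofReal (‖u (x₀ + t • EuclideanSpace.single i (1:ℝ))‖ *
        ‖fderiv ℝ u (x₀ + t • EuclideanSpace.single i (1:ℝ))
          (EuclideanSpace.single i (1:ℝ))‖) := by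
  set e : E3 := EuclideanSpace.single i (1:ℝ) with he
  set γ : ℝ → E3 := fun t => x₀ + t • e with hγ
  have hγd : ∀ t, HasDerivAt γ e t := by
    intro t
    have h1 : HasDerivAt (fun t : ℝ => t • e) ((1:ℝ) • e) t :=
      (hasDerivAt_id t).smul_const e
    have h1' := h1.const_add x₀
    rw [one_smul] at h1'
    exact h1'
  have hγc : Continuous γ := continuous_const.add (continuous_id.smul continuous_const)
  set v : ℝ → E3 := fun t => u (γ t) with hv
  have hvd : ∀ t, HasDerivAt v (fderiv ℝ u (γ t) e) t := fun t =>
    ((hu.differentiable one_ne_zero (γ t)).hasFDerivAt).comp_hasDerivAt t (hγd t)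
  have hvc : Continuous v := hu.continuous.comp hγc
  set w : ℝ → E3 := fun t => fderiv ℝ u (γ t) e with hw
  have hwc : Continuous w := ((hu.continuous_fderiv one_ne_zero).comp hγc).clm_apply
    continuous_const
  set φ : ℝ → ℝ := fun t => ‖v t‖ ^ 2 with hφ
  set φ' : ℝ → ℝ := fun t => 2 * inner ℝ (v t) (w t) with hφ'
  have hφd : ∀ t, HasDerivAt φ (φ' t) t := by
    intro t
    have h1 : HasDerivAt (fun t => (inner ℝ (v t) (v t) : ℝ))
        (inner ℝ (v t) (w t) + inner ℝ (w t) (v t)) t := (hvd t).inner ℝ (hvd t)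
    have h2 : φ = fun t => (inner ℝ (v t) (v t) : ℝ) :=
      funext fun t => (real_inner_self_eq_norm_sq (v t)).symm
    have h1' : HasDerivAt (fun t => (inner ℝ (v t) (v t) : ℝ)) (φ' t) t := by
      convert h1 using 1
      show (2:ℝ) * inner ℝ (v t) (w t) = _
      rw [real_inner_comm (w t) (v t)]
      ring
    rw [h2]
    exact h1'
  have hφ'c : Continuous φ' := (continuous_const.mul (hvc.inner hwc))
  -- compact supports
  have hγe : Isometry γ := by
    apply Isometry.of_dist_eq
    intro t t'
    simp only [hγ, dist_eq_norm]
    rw [add_sub_add_left_eq_sub, ← sub_smul, norm_smul, he, EuclideanSpace.norm_single]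
    simp [Real.dist_eq]
  have hvs : HasCompactSupport v := hus.comp_isClosedEmbedding hγe.isClosedEmbedding
  have hφs : HasCompactSupport φ :=
    hvs.comp_left (g := fun y : E3 => ‖y‖ ^ 2) (by simp)
  -- main bound
  have hmain : 2 * φ s ≤ ∫ t, |φ' t| := two_mul_le_integral_abs_deriv hφd hφ'c hφs s
  have habs : ∀ t, |φ' t| ≤ 2 * (‖v t‖ * ‖w t‖) := by
    intro t
    rw [hφ', abs_mul, abs_two]
    have := abs_real_inner_le_norm (v t) (w t)
    nlinarith [abs_nonneg (inner ℝ (v t) (w t) : ℝ)]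
  -- integrability
  have hsupp : HasCompactSupport (fun t => 2 * (‖v t‖ * ‖w t‖)) := by
    apply hvs.mono'
    intro t ht
    apply subset_closure
    intro hv0
    apply ht
    simp [hv0]
  have hint2 : Integrable (fun t => 2 * (‖v t‖ * ‖w t‖)) :=
    (continuous_const.mul (hvc.norm.mul hwc.norm)).integrable_of_hasCompactSupport hsupp
  have hφ's : HasCompactSupport φ' := by
    apply hvs.mono'
    intro t ht
    apply subset_closure
    intro hv0
    apply ht
    simp [hφ', hv0]
  have hintabs : Integrable (fun t => |φ' t|) :=
    (hφ'c.integrable_of_hasCompactSupport hφ's).abs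
  have h2 : 2 * φ s ≤ ∫ t, 2 * (‖v t‖ * ‖w t‖) :=
    hmain.trans (integral_mono hintabs hint2 habs)
  have h3 : φ s ≤ ∫ t, ‖v t‖ * ‖w t‖ := by
    rw [integral_const_mul] at h2
    linarith
  -- pass to lintegral
  have h4 : ENNReal.ofReal (φ s) ≤ ENNReal.ofReal (∫ t, ‖v t‖ * ‖w t‖) :=
    ENNReal.ofReal_le_ofReal h3
  rw [ofReal_integral_eq_lintegral_ofReal
    (hint2.const_mul (1/2) |>.congr (by filter_upwards with t; ring))
    (Filter.Eventually.of_forall fun t => by positivity)] at h4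
  exact h4

end LadyzhenskayaAux

/-- Ladyzhenskaya's three-dimensional `L⁴` interpolation inequality with the
constant `4/(3√3)`: `‖u‖_{L⁴(ℝ³)} ≤ (4/(3√3))·‖u‖_{L²}^{1/4}·‖∇u‖_{L²}^{3/4}`
for compactly supported `C¹` vector fields on `ℝ³`, where `‖∇u‖_{L²}` is the
`L²` norm of the full (Frobenius) gradient. -/
theorem ladyzhenskaya_L4_dim3
    (u : EuclideanSpace ℝ (Fin 3) → EuclideanSpace ℝ (Fin 3))
    (hu : ContDiff ℝ 1 u) (hus : HasCompactSupport u) :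
    (∫ x, ‖u x‖ ^ 4) ^ ((1 : ℝ) / 4) ≤
      (4 / (3 * Real.sqrt 3)) *
        ((∫ x, ‖u x‖ ^ 2) ^ ((1 : ℝ) / 2)) ^ ((1 : ℝ) / 4) *
        ((∫ x, ∑ i, ∑ k, (fderiv ℝ u x (EuclideanSpace.single i (1 : ℝ)) k) ^ 2) ^
            ((1 : ℝ) / 2)) ^ ((3 : ℝ) / 4) := by
  classical
  set f : E3 → ℝ := fun x => ‖u x‖ with hf
  set g : Fin 3 → E3 → ℝ := fun i x => ‖fderiv ℝ u x (EuclideanSpace.single i (1:ℝ))‖ with hg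
  have hfc : Continuous f := hu.continuous.norm
  have hfderivc : Continuous (fderiv ℝ u) := hu.continuous_fderiv one_ne_zero
  have hgc : ∀ i, Continuous (g i) := fun i =>
    (hfderivc.clm_apply continuous_const).norm
  have hgs : ∀ i, HasCompactSupport (g i) := by
    intro i
    have h1 : HasCompactSupport (fderiv ℝ u) := hus.fderiv ℝ
    exact h1.comp_left (g := fun L : E3 →L[ℝ] E3 => ‖L (EuclideanSpace.single i (1:ℝ))‖)
      (by simp)
  -- integrability
  have int4 : Integrable (fun x : E3 => f x ^ 4) :=
    (hfc.pow 4).integrable_of_hasCompactSupport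
      (hus.comp_left (g := fun y : E3 => ‖y‖ ^ 4) (by simp) :)
  have int2 : Integrable (fun x : E3 => f x ^ 2) :=
    (hfc.pow 2).integrable_of_hasCompactSupport
      (hus.comp_left (g := fun y : E3 => ‖y‖ ^ 2) (by simp) :)
  have intg2 : ∀ i, Integrable (fun x : E3 => g i x ^ 2) := fun i =>
    ((hgc i).pow 2).integrable_of_hasCompactSupport
      ((hgs i).comp_left (g := fun y : ℝ => y ^ 2) (by simp) :)
  -- ENNReal-valued coordinates versions
  set F : ℝ × ℝ × ℝ → ℝ≥0∞ := fun p => ENNReal.ofReal (f (PsiE p)) with hF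
  set G : Fin 3 → ℝ × ℝ × ℝ → ℝ≥0∞ := fun i p => ENNReal.ofReal (g i (PsiE p)) with hG
  have mF : Measurable F :=
    ENNReal.measurable_ofReal.comp (hfc.measurable.comp PsiE.measurable)
  have mG : ∀ i, Measurable (G i) := fun i =>
    ENNReal.measurable_ofReal.comp ((hgc i).measurable.comp PsiE.measurable)
  -- pointwise power identities
  have hFpow2 : ∀ p : ℝ × ℝ × ℝ, F p ^ (2:ℝ) = ENNReal.ofReal (f (PsiE p) ^ 2) := by
    intro p
    rw [hF]
    rw [ENNReal.ofReal_rpow_of_nonneg (norm_nonneg _) (by norm_num : (0:ℝ) ≤ 2)]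
    rw [Real.rpow_two]
  have hFpow4 : ∀ p : ℝ × ℝ × ℝ, F p ^ (4:ℝ) = ENNReal.ofReal (f (PsiE p) ^ 4) := by
    intro p
    rw [hF]
    rw [ENNReal.ofReal_rpow_of_nonneg (norm_nonneg _) (by norm_num : (0:ℝ) ≤ 4),
      show (4:ℝ) = ((4:ℕ):ℝ) by norm_num, Real.rpow_natCast]
  have hGpow2 : ∀ i (p : ℝ × ℝ × ℝ), G i p ^ (2:ℝ) = ENNReal.ofReal (g i (PsiE p) ^ 2) := by
    intro i p
    rw [hG]
    rw [ENNReal.ofReal_rpow_of_nonneg (norm_nonneg _) (by norm_num : (0:ℝ) ≤ 2)]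
    rw [Real.rpow_two]
  -- the three slice hypotheses
  have hkey1 : ∀ x y z : ℝ, F (x, y, z) ^ (2:ℝ) ≤ ∫⁻ t, F (t, y, z) * G 0 (t, y, z) := by
    intro x y z
    have hl := line_bound hu hus 0 (PsiE (0, y, z)) x
    calc F (x, y, z) ^ (2:ℝ) = ENNReal.ofReal (f (PsiE (x, y, z)) ^ 2) := hFpow2 _
      _ = ENNReal.ofReal
            (‖u (PsiE (0, y, z) + x • EuclideanSpace.single 0 (1:ℝ))‖ ^ 2) := by
          rw [← psil0]
      _ ≤ _ := hl
      _ = ∫⁻ t, F (t, y, z) * G 0 (t, y, z) := by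
          refine lintegral_congr fun t => ?_
          rw [← psil0, ← ENNReal.ofReal_mul (norm_nonneg _)]
  have hkey2 : ∀ x y z : ℝ, F (x, y, z) ^ (2:ℝ) ≤ ∫⁻ t, F (x, t, z) * G 1 (x, t, z) := by
    intro x y z
    have hl := line_bound hu hus 1 (PsiE (x, 0, z)) y
    calc F (x, y, z) ^ (2:ℝ) = ENNReal.ofReal (f (PsiE (x, y, z)) ^ 2) := hFpow2 _
      _ = ENNReal.ofReal
            (‖u (PsiE (x, 0, z) + y • EuclideanSpace.single 1 (1:ℝ))‖ ^ 2) := by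
          rw [← psil1]
      _ ≤ _ := hl
      _ = ∫⁻ t, F (x, t, z) * G 1 (x, t, z) := by
          refine lintegral_congr fun t => ?_
          rw [← psil1, ← ENNReal.ofReal_mul (norm_nonneg _)]
  have hkey3 : ∀ x y z : ℝ, F (x, y, z) ^ (2:ℝ) ≤ ∫⁻ t, F (x, y, t) * G 2 (x, y, t) := by
    intro x y z
    have hl := line_bound hu hus 2 (PsiE (x, y, 0)) z
    calc F (x, y, z) ^ (2:ℝ) = ENNReal.ofReal (f (PsiE (x, y, z)) ^ 2) := hFpow2 _
      _ = ENNReal.ofReal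
            (‖u (PsiE (x, y, 0) + z • EuclideanSpace.single 2 (1:ℝ))‖ ^ 2) := by
          rw [← psil2]
      _ ≤ _ := hl
      _ = ∫⁻ t, F (x, y, t) * G 2 (x, y, t) := by
          refine lintegral_congr fun t => ?_
          rw [← psil2, ← ENNReal.ofReal_mul (norm_nonneg _)]
  -- main ENNReal inequality
  have hmainE := key3 mF (mG 0) (mG 1) (mG 2) hkey1 hkey2 hkey3
  -- convert the lintegrals to Bochner integrals
  set a4 : ℝ := ∫ x : E3, f x ^ 4 with ha4
  set a2 : ℝ := ∫ x : E3, f x ^ 2 with ha2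
  set B : Fin 3 → ℝ := fun i => ∫ x : E3, g i x ^ 2 with hB
  have ha4nn : 0 ≤ a4 := integral_nonneg fun x => by positivity
  have ha2nn : 0 ≤ a2 := integral_nonneg fun x => by positivity
  have hBnn : ∀ i, 0 ≤ B i := fun i => integral_nonneg fun x => by positivity
  have conv4 : (∫⁻ p, F p ^ (4:ℝ)) = ENNReal.ofReal a4 := by
    rw [lintegral_congr hFpow4,
      PsiE_mp.lintegral_comp (f := fun x : E3 => ENNReal.ofReal (f x ^ 4))
        (ENNReal.measurable_ofReal.comp ((hfc.pow 4).measurable)),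
      ha4, ofReal_integral_eq_lintegral_ofReal int4
        (Filter.Eventually.of_forall fun x => by positivity)]
  have conv2 : (∫⁻ p, F p ^ (2:ℝ)) = ENNReal.ofReal a2 := by
    rw [lintegral_congr hFpow2,
      PsiE_mp.lintegral_comp (f := fun x : E3 => ENNReal.ofReal (f x ^ 2))
        (ENNReal.measurable_ofReal.comp ((hfc.pow 2).measurable)),
      ha2, ofReal_integral_eq_lintegral_ofReal int2
        (Filter.Eventually.of_forall fun x => by positivity)]
  have convG : ∀ i, (∫⁻ p, G i p ^ (2:ℝ)) = ENNReal.ofReal (B i) := by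
    intro i
    rw [lintegral_congr (hGpow2 i),
      PsiE_mp.lintegral_comp (f := fun x : E3 => ENNReal.ofReal (g i x ^ 2))
        (ENNReal.measurable_ofReal.comp (((hgc i).pow 2).measurable)),
      hB, ofReal_integral_eq_lintegral_ofReal (intg2 i)
        (Filter.Eventually.of_forall fun x => by positivity)]
  rw [conv4, conv2, convG 0, convG 1, convG 2] at hmainE
  -- to a real inequality
  have hreal : a4 ≤ a2 ^ ((1:ℝ)/2) * B 0 ^ ((1:ℝ)/2) * B 1 ^ ((1:ℝ)/2) * B 2 ^ ((1:ℝ)/2) := by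
    have hhalf : (0:ℝ) ≤ 1/2 := by norm_num
    rw [ENNReal.ofReal_rpow_of_nonneg ha2nn hhalf,
      ENNReal.ofReal_rpow_of_nonneg (hBnn 0) hhalf,
      ENNReal.ofReal_rpow_of_nonneg (hBnn 1) hhalf,
      ENNReal.ofReal_rpow_of_nonneg (hBnn 2) hhalf,
      ← ENNReal.ofReal_mul (by positivity), ← ENNReal.ofReal_mul (by positivity),
      ← ENNReal.ofReal_mul (by positivity)] at hmainE
    exact (ENNReal.ofReal_le_ofReal_iff (by positivity)).mp hmainE
  -- identify the gradient integral
  have hpt : ∀ (x : E3) (i : Fin 3),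
      (∑ k, (fderiv ℝ u x (EuclideanSpace.single i (1:ℝ)) k) ^ 2) = g i x ^ 2 := by
    intro x i
    rw [hg]; simp only
    rw [EuclideanSpace.norm_eq, Real.sq_sqrt (by positivity)]
    refine Finset.sum_congr rfl fun k _ => ?_
    rw [Real.norm_eq_abs, sq_abs]
  have hDeq : (∫ x : E3, ∑ i, ∑ k,
      (fderiv ℝ u x (EuclideanSpace.single i (1:ℝ)) k) ^ 2) = B 0 + B 1 + B 2 := by
    have : (fun x : E3 => ∑ i, ∑ k,
        (fderiv ℝ u x (EuclideanSpace.single i (1:ℝ)) k) ^ 2) =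
        fun x : E3 => g 0 x ^ 2 + g 1 x ^ 2 + g 2 x ^ 2 := by
      funext x
      rw [Fin.sum_univ_three, hpt x 0, hpt x 1, hpt x 2]
    have i01 : Integrable (fun x : E3 => g 0 x ^ 2 + g 1 x ^ 2) := (intg2 0).add (intg2 1)
    rw [this, integral_add i01 (intg2 2), integral_add (intg2 0) (intg2 1)]
  -- final numeric computation
  rw [hDeq]
  set D : ℝ := B 0 + B 1 + B 2 with hD
  have hDnn : 0 ≤ D := by
    have := hBnn 0; have := hBnn 1; have := hBnn 2
    rw [hD]; linarith
  -- AM-GM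
  have hamgm : B 0 ^ ((1:ℝ)/2) * B 1 ^ ((1:ℝ)/2) * B 2 ^ ((1:ℝ)/2) ≤
      (D/3) ^ ((3:ℝ)/2) := by
    have h1 : B 0 ^ ((1:ℝ)/2) * B 1 ^ ((1:ℝ)/2) * B 2 ^ ((1:ℝ)/2) =
        (B 0 * B 1 * B 2) ^ ((1:ℝ)/2) := by
      rw [Real.mul_rpow (mul_nonneg (hBnn 0) (hBnn 1)) (hBnn 2),
        Real.mul_rpow (hBnn 0) (hBnn 1)]
    have h2 : B 0 * B 1 * B 2 ≤ (D/3) ^ (3:ℕ) := by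
      have h0 := hBnn 0; have h1' := hBnn 1; have h2' := hBnn 2
      rw [hD]
      nlinarith [sq_nonneg (B 0 - B 1), sq_nonneg (B 1 - B 2), sq_nonneg (B 0 - B 2),
        mul_nonneg h0 h1', mul_nonneg h1' h2', mul_nonneg h0 h2',
        mul_nonneg (mul_nonneg h0 h1') h2']
    have h3 : ((D/3) ^ (3:ℕ)) ^ ((1:ℝ)/2) = (D/3) ^ ((3:ℝ)/2) := by
      rw [← Real.rpow_natCast (D/3) 3, ← Real.rpow_mul (by positivity)]
      norm_num
    rw [h1, ← h3]
    exact Real.rpow_le_rpow (by positivity) h2 (by norm_num)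
  have hfinal : a4 ≤ a2 ^ ((1:ℝ)/2) * (D/3) ^ ((3:ℝ)/2) := by
    calc a4 ≤ a2 ^ ((1:ℝ)/2) * B 0 ^ ((1:ℝ)/2) * B 1 ^ ((1:ℝ)/2) * B 2 ^ ((1:ℝ)/2) := hreal
      _ = a2 ^ ((1:ℝ)/2) * (B 0 ^ ((1:ℝ)/2) * B 1 ^ ((1:ℝ)/2) * B 2 ^ ((1:ℝ)/2)) := by ring
      _ ≤ a2 ^ ((1:ℝ)/2) * (D/3) ^ ((3:ℝ)/2) :=
          mul_le_mul_of_nonneg_left hamgm (by positivity)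
  -- take fourth roots
  have hstep : a4 ^ ((1:ℝ)/4) ≤ a2 ^ ((1:ℝ)/8) * D ^ ((3:ℝ)/8) * ((3:ℝ) ^ (-((3:ℝ)/8))) := by
    calc a4 ^ ((1:ℝ)/4) ≤ (a2 ^ ((1:ℝ)/2) * (D/3) ^ ((3:ℝ)/2)) ^ ((1:ℝ)/4) :=
          Real.rpow_le_rpow ha4nn hfinal (by norm_num)
      _ = a2 ^ ((1:ℝ)/8) * (D/3) ^ ((3:ℝ)/8) := by
          rw [Real.mul_rpow (by positivity) (by positivity),
            ← Real.rpow_mul ha2nn, ← Real.rpow_mul (by positivity)]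
          norm_num
      _ = a2 ^ ((1:ℝ)/8) * D ^ ((3:ℝ)/8) * ((3:ℝ) ^ (-((3:ℝ)/8))) := by
          rw [Real.div_rpow hDnn (by norm_num), Real.rpow_neg (by norm_num)]
          rw [div_eq_mul_inv]
          ring
  have hc : ((3:ℝ) ^ (-((3:ℝ)/8))) ≤ 4 / (3 * Real.sqrt 3) := by
    have hs : (0:ℝ) < Real.sqrt 3 := Real.sqrt_pos.mpr (by norm_num)
    have hL : (0:ℝ) ≤ 3 ^ (-((3:ℝ)/8)) := (Real.rpow_pos_of_pos (by norm_num) _).le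
    have hR : (0:ℝ) ≤ 4 / (3 * Real.sqrt 3) := by positivity
    rw [← pow_le_pow_iff_left₀ hL hR (show 8 ≠ 0 by norm_num)]
    have h1 : ((3:ℝ) ^ (-((3:ℝ)/8))) ^ (8:ℕ) = (3:ℝ) ^ (-(3:ℝ)) := by
      rw [← Real.rpow_natCast ((3:ℝ) ^ (-((3:ℝ)/8))) 8, ← Real.rpow_mul (by norm_num)]
      norm_num
    have h2 : ((4:ℝ) / (3 * Real.sqrt 3)) ^ (8:ℕ) = 65536 / 531441 := by
      rw [div_pow, mul_pow]
      have h3 : (Real.sqrt 3) ^ (8:ℕ) = ((Real.sqrt 3) ^ 2) ^ 4 := by ring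
      rw [h3, Real.sq_sqrt (by norm_num : (0:ℝ) ≤ 3)]
      norm_num
    rw [h1, h2, Real.rpow_neg (by norm_num : (0:ℝ) ≤ 3),
      show (3:ℝ) = ((3:ℕ):ℝ) by norm_num, Real.rpow_natCast]
    norm_num
  -- rewrite the goal exponents
  have hg2 : (a2 ^ ((1:ℝ)/2)) ^ ((1:ℝ)/4) = a2 ^ ((1:ℝ)/8) := by
    rw [← Real.rpow_mul ha2nn]; norm_num
  have hg3 : (D ^ ((1:ℝ)/2)) ^ ((3:ℝ)/4) = D ^ ((3:ℝ)/8) := by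
    rw [← Real.rpow_mul hDnn]; norm_num
  rw [hg2, hg3]
  calc a4 ^ ((1:ℝ)/4) ≤ a2 ^ ((1:ℝ)/8) * D ^ ((3:ℝ)/8) * ((3:ℝ) ^ (-((3:ℝ)/8))) := hstep
    _ ≤ a2 ^ ((1:ℝ)/8) * D ^ ((3:ℝ)/8) * (4 / (3 * Real.sqrt 3)) :=
        mul_le_mul_of_nonneg_left hc (by positivity)
    _ = 4 / (3 * Real.sqrt 3) * a2 ^ ((1:ℝ)/8) * D ^ ((3:ℝ)/8) := by ring
end

section
/- Let u : ℝ³ → ℝ³ be a continuously differentiable vector field with compact support. Then ‖u‖_{L⁶(ℝ³)} ≤ (2/√3)·‖∇u‖_{L²(ℝ³)}. -/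
open MeasureTheory Finset

open Function Set
open scoped ENNReal

section LadyzhenskayaAux

private lemma ofReal_norm_eq_coe_nnnorm {E : Type*} [SeminormedAddGroup E] (a : E) :
    ENNReal.ofReal ‖a‖ = (‖a‖₊ : ℝ≥0∞) :=
  ofReal_norm a

/-- Hölder step: pull out a constant and apply Cauchy–Schwarz to the other two factors. -/
private lemma ladyzhenskaya_pull_cs {α : Type*} [MeasurableSpace α] (ν : Measure α) (c : ℝ≥0∞)
    {G H : α → ℝ≥0∞} (hG : Measurable G) (hH : Measurable H) :
    ∫⁻ t, c ^ (2⁻¹ : ℝ) * (G t ^ (2⁻¹ : ℝ) * H t ^ (2⁻¹ : ℝ)) ∂ν ≤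
      c ^ (2⁻¹ : ℝ) * ((∫⁻ t, G t ∂ν) ^ (2⁻¹ : ℝ) * (∫⁻ t, H t ∂ν) ^ (2⁻¹ : ℝ)) := by
  rw [lintegral_const_mul (f := fun t => G t ^ (2⁻¹ : ℝ) * H t ^ (2⁻¹ : ℝ)) _ ((hG.pow_const _).mul (hH.pow_const _))]
  gcongr
  exact ENNReal.lintegral_mul_norm_pow_le hG.aemeasurable hH.aemeasurable
    (by norm_num) (by norm_num) (by norm_num)

/-- Loomis–Whitney / grid-lines inequality in three dimensions, with three different
functions. -/
private lemma ladyzhenskaya_lw3 {A : Fin 3 → Type*} [∀ i, MeasurableSpace (A i)]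
    (μ : ∀ i, Measure (A i)) [∀ i, SigmaFinite (μ i)]
    (f : Fin 3 → (∀ i, A i) → ℝ≥0∞) (hf : ∀ i, Measurable (f i)) :
    ∫⁻ x, ∏ i, (∫⁻ t, f i (update x i t) ∂μ i) ^ (2⁻¹ : ℝ) ∂(Measure.pi μ) ≤
      ∏ i, (∫⁻ x, f i x ∂(Measure.pi μ)) ^ (2⁻¹ : ℝ) := by
  cases isEmpty_or_nonempty (∀ i, A i) with
  | inl h => simp [lintegral_of_isEmpty]
  | inr h =>
  inhabit (∀ i, A i)
  set g : Fin 3 → Finset (Fin 3) → (∀ i, A i) → ℝ≥0∞ := fun i s => ∫⋯∫⁻_s, f i ∂μ with hg_def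
  have hg : ∀ i s, Measurable (g i s) := fun i s => (hf i).lmarginal μ
  set F₀ : (∀ i, A i) → ℝ≥0∞ := fun x =>
    g 0 {0} x ^ (2⁻¹ : ℝ) * (g 1 {1} x ^ (2⁻¹ : ℝ) * g 2 {2} x ^ (2⁻¹ : ℝ)) with hF₀
  set F₁ : (∀ i, A i) → ℝ≥0∞ := fun x =>
    g 0 {0} x ^ (2⁻¹ : ℝ) * (g 1 {0, 1} x ^ (2⁻¹ : ℝ) * g 2 {0, 2} x ^ (2⁻¹ : ℝ)) with hF₁
  set F₂ : (∀ i, A i) → ℝ≥0∞ := fun x =>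
    g 1 {0, 1} x ^ (2⁻¹ : ℝ) * (g 0 {0, 1} x ^ (2⁻¹ : ℝ) * g 2 {0, 1, 2} x ^ (2⁻¹ : ℝ)) with hF₂
  set F₃ : (∀ i, A i) → ℝ≥0∞ := fun x =>
    g 2 {0, 1, 2} x ^ (2⁻¹ : ℝ) * (g 1 {0, 1, 2} x ^ (2⁻¹ : ℝ) * g 0 {0, 1, 2} x ^ (2⁻¹ : ℝ))
    with hF₃
  have hmF₀ : Measurable F₀ :=
    ((hg 0 {0}).pow_const _).mul (((hg 1 {1}).pow_const _).mul ((hg 2 {2}).pow_const _))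
  have hmF₁ : Measurable F₁ :=
    ((hg 0 {0}).pow_const _).mul (((hg 1 {0,1}).pow_const _).mul ((hg 2 {0,2}).pow_const _))
  have hmF₂ : Measurable F₂ :=
    ((hg 1 {0,1}).pow_const _).mul (((hg 0 {0,1}).pow_const _).mul ((hg 2 {0,1,2}).pow_const _))
  have key : (∫⋯∫⁻_{0, 1, 2}, F₀ ∂μ) default ≤ F₃ default := by
    calc (∫⋯∫⁻_{0, 1, 2}, F₀ ∂μ) default
        = (∫⋯∫⁻_({1, 2} : Finset (Fin 3)),
            (fun x => ∫⁻ t, F₀ (update x 0 t) ∂μ 0) ∂μ) default := by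
          rw [show ({0, 1, 2} : Finset (Fin 3)) = insert 0 {1, 2} from rfl,
            lmarginal_insert' _ hmF₀ (by decide)]
      _ ≤ (∫⋯∫⁻_({1, 2} : Finset (Fin 3)), F₁ ∂μ) default := by
          refine lmarginal_mono (fun x => ?_) default
          have h1 : ∀ t, g 0 {0} (update x 0 t) = g 0 {0} x := by
            simp only [hg_def]
            exact fun t => lmarginal_update_of_mem μ (by decide) _ _ _
          calc ∫⁻ t, F₀ (update x 0 t) ∂μ 0
              = ∫⁻ t, g 0 {0} x ^ (2⁻¹ : ℝ) *
                  (g 1 {1} (update x 0 t) ^ (2⁻¹ : ℝ) *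
                   g 2 {2} (update x 0 t) ^ (2⁻¹ : ℝ)) ∂μ 0 := by
                simp_rw [hF₀, h1]
            _ ≤ g 0 {0} x ^ (2⁻¹ : ℝ) *
                  ((∫⁻ t, g 1 {1} (update x 0 t) ∂μ 0) ^ (2⁻¹ : ℝ) *
                   (∫⁻ t, g 2 {2} (update x 0 t) ∂μ 0) ^ (2⁻¹ : ℝ)) :=
                ladyzhenskaya_pull_cs (μ 0) _ ((hg 1 {1}).comp (measurable_update _))
                  ((hg 2 {2}).comp (measurable_update _))
            _ = F₁ x := by
                simp only [hF₁, hg_def]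
                congr 2
                · rw [show ({0, 1} : Finset (Fin 3)) = insert 0 {1} from rfl,
                    lmarginal_insert _ (hf 1) (by decide)]
                · rw [show ({0, 2} : Finset (Fin 3)) = insert 0 {2} from rfl,
                    lmarginal_insert _ (hf 2) (by decide)]
      _ = (∫⋯∫⁻_({2} : Finset (Fin 3)),
            (fun x => ∫⁻ t, F₁ (update x 1 t) ∂μ 1) ∂μ) default := by
          rw [show ({1, 2} : Finset (Fin 3)) = insert 1 {2} from rfl,
            lmarginal_insert' _ hmF₁ (by decide)]
      _ ≤ (∫⋯∫⁻_({2} : Finset (Fin 3)), F₂ ∂μ) default := by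
          refine lmarginal_mono (fun x => ?_) default
          have h1 : ∀ t, g 1 {0, 1} (update x 1 t) = g 1 {0, 1} x := by
            simp only [hg_def]
            exact fun t => lmarginal_update_of_mem μ (by decide) _ _ _
          calc ∫⁻ t, F₁ (update x 1 t) ∂μ 1
              = ∫⁻ t, g 1 {0, 1} x ^ (2⁻¹ : ℝ) *
                  (g 0 {0} (update x 1 t) ^ (2⁻¹ : ℝ) *
                   g 2 {0, 2} (update x 1 t) ^ (2⁻¹ : ℝ)) ∂μ 1 := by
                simp_rw [hF₁, h1]
                congr 1; funext t; ring
            _ ≤ g 1 {0, 1} x ^ (2⁻¹ : ℝ) *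
                  ((∫⁻ t, g 0 {0} (update x 1 t) ∂μ 1) ^ (2⁻¹ : ℝ) *
                   (∫⁻ t, g 2 {0, 2} (update x 1 t) ∂μ 1) ^ (2⁻¹ : ℝ)) :=
                ladyzhenskaya_pull_cs (μ 1) _ ((hg 0 {0}).comp (measurable_update _))
                  ((hg 2 {0,2}).comp (measurable_update _))
            _ = F₂ x := by
                simp only [hF₂, hg_def]
                congr 2
                · rw [show ({0, 1} : Finset (Fin 3)) = insert 1 {0} by decide,
                    lmarginal_insert _ (hf 0) (by decide)]
                · rw [show ({0, 1, 2} : Finset (Fin 3)) = insert 1 {0, 2} by decide,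
                    lmarginal_insert _ (hf 2) (by decide)]
      _ = (∫⋯∫⁻_(∅ : Finset (Fin 3)),
            (fun x => ∫⁻ t, F₂ (update x 2 t) ∂μ 2) ∂μ) default := by
          rw [show ({2} : Finset (Fin 3)) = insert 2 ∅ from rfl,
            lmarginal_insert' _ hmF₂ (by decide)]
      _ ≤ F₃ default := by
          rw [lmarginal_empty]
          have h1 : ∀ t, g 2 {0, 1, 2} (update (default : ∀ i, A i) 2 t)
              = g 2 {0, 1, 2} (default : ∀ i, A i) := by
            simp only [hg_def]
            exact fun t => lmarginal_update_of_mem μ (by decide) _ _ _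
          calc ∫⁻ t, F₂ (update (default : ∀ i, A i) 2 t) ∂μ 2
              = ∫⁻ t, g 2 {0, 1, 2} (default : ∀ i, A i) ^ (2⁻¹ : ℝ) *
                  (g 1 {0, 1} (update (default : ∀ i, A i) 2 t) ^ (2⁻¹ : ℝ) *
                   g 0 {0, 1} (update (default : ∀ i, A i) 2 t) ^ (2⁻¹ : ℝ)) ∂μ 2 := by
                simp_rw [hF₂, h1]
                congr 1; funext t; ring
            _ ≤ g 2 {0, 1, 2} (default : ∀ i, A i) ^ (2⁻¹ : ℝ) *
                  ((∫⁻ t, g 1 {0, 1} (update (default : ∀ i, A i) 2 t) ∂μ 2) ^ (2⁻¹ : ℝ) *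
                   (∫⁻ t, g 0 {0, 1} (update (default : ∀ i, A i) 2 t) ∂μ 2) ^ (2⁻¹ : ℝ)) :=
                ladyzhenskaya_pull_cs (μ 2) _ ((hg 1 {0,1}).comp (measurable_update _))
                  ((hg 0 {0,1}).comp (measurable_update _))
            _ = F₃ default := by
                simp only [hF₃, hg_def]
                congr 2
                · rw [show ({0, 1, 2} : Finset (Fin 3)) = insert 2 {0, 1} by decide,
                    lmarginal_insert _ (hf 1) (by decide)]
                · rw [show ({0, 1, 2} : Finset (Fin 3)) = insert 2 {0, 1} by decide,
                    lmarginal_insert _ (hf 0) (by decide)]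
  have huniv : ({0, 1, 2} : Finset (Fin 3)) = Finset.univ := by decide
  have hfun : (fun x => ∏ i, (∫⁻ t, f i (update x i t) ∂μ i) ^ (2⁻¹ : ℝ)) = F₀ := by
    funext x
    rw [Fin.prod_univ_three]
    simp only [hF₀, hg_def, lmarginal_singleton]
    ring
  calc ∫⁻ x, ∏ i, (∫⁻ t, f i (update x i t) ∂μ i) ^ (2⁻¹ : ℝ) ∂(Measure.pi μ)
      = (∫⋯∫⁻_{0, 1, 2}, F₀ ∂μ) default := by
        rw [lintegral_eq_lmarginal_univ (default : ∀ i, A i), ← huniv]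
        exact congrFun (congrArg _ hfun) _
    _ ≤ F₃ default := key
    _ = ∏ i, (∫⁻ x, f i x ∂(Measure.pi μ)) ^ (2⁻¹ : ℝ) := by
        rw [Fin.prod_univ_three]
        simp only [hF₃, hg_def, huniv, lmarginal_univ]
        ring

/-- Two-sided fundamental theorem of calculus bound: for a compactly supported `C¹`
function on `ℝ`, twice its value is bounded by the integral of its derivative. -/
private lemma ladyzhenskaya_ftc {f : ℝ → ℝ} (hf : ContDiff ℝ 1 f)
    (h2f : HasCompactSupport f) (x : ℝ) :
    2 * (‖f x‖₊ : ℝ≥0∞) ≤ ∫⁻ y, ‖deriv f y‖₊ := by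
  have h1 : (‖f x‖₊ : ℝ≥0∞) ≤ ∫⁻ y in Iic x, ‖deriv f y‖₊ :=
    HasCompactSupport.enorm_le_lintegral_Ici_deriv hf h2f x
  have h2 : (‖f x‖₊ : ℝ≥0∞) ≤ ∫⁻ y in Ici x, ‖deriv f y‖₊ := by
    have hfn : ContDiff ℝ 1 (fun t => f (-t)) := hf.comp contDiff_neg
    have h2fn : HasCompactSupport (fun t => f (-t)) :=
      h2f.comp_homeomorph (Homeomorph.neg ℝ)
    have h3 := HasCompactSupport.enorm_le_lintegral_Ici_deriv hfn h2fn (-x)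
    simp only [neg_neg] at h3
    calc (‖f x‖₊ : ℝ≥0∞) ≤ ∫⁻ y in Iic (-x), ‖deriv (fun t => f (-t)) y‖₊ := h3
      _ = ∫⁻ y in Iic (-x), ‖deriv f (-y)‖₊ := by
          apply lintegral_congr fun y => ?_
          rw [deriv_comp_neg, nnnorm_neg]
      _ = ∫⁻ y in Ici x, ‖deriv f y‖₊ := by
          have hp : MeasurePreserving (fun y : ℝ => -y) volume volume :=
            Measure.measurePreserving_neg volume
          have hemb : MeasurableEmbedding (fun y : ℝ => -y) :=
            (Homeomorph.neg ℝ).measurableEmbedding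
          have hpre : (fun y : ℝ => -y) ⁻¹' (Ici x) = Iic (-x) := by
            ext y; simp [le_neg]
          rw [← hpre]
          exact hp.setLIntegral_comp_preimage_emb hemb (fun z => ‖deriv f z‖₊) (Ici x)
  have hIic : ∫⁻ y in Iic x, (‖deriv f y‖₊ : ℝ≥0∞) = ∫⁻ y in Iio x, ‖deriv f y‖₊ :=
    setLIntegral_congr Iio_ae_eq_Iic.symm
  calc 2 * (‖f x‖₊ : ℝ≥0∞) = (‖f x‖₊ : ℝ≥0∞) + ‖f x‖₊ := by ring
    _ ≤ (∫⁻ y in Iio x, ‖deriv f y‖₊) + ∫⁻ y in Ici x, ‖deriv f y‖₊ := by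
        rw [← hIic]; exact add_le_add h1 h2
    _ = ∫⁻ y in Iio x ∪ Ici x, ‖deriv f y‖₊ := by
        rw [lintegral_union measurableSet_Ici (Iio_disjoint_Ici le_rfl)]
    _ = ∫⁻ y, ‖deriv f y‖₊ := by rw [Iio_union_Ici, setLIntegral_univ]

/-- Final real-number computation for the Ladyzhenskaya inequality. -/
private lemma ladyzhenskaya_algebra {a b0 b1 b2 : ℝ} (ha : 0 ≤ a)
    (hb0 : 0 ≤ b0) (hb1 : 0 ≤ b1) (hb2 : 0 ≤ b2)
    (h : a ≤ (2 * a ^ (2⁻¹ : ℝ) * b0 ^ (2⁻¹ : ℝ)) ^ (2⁻¹ : ℝ) *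
        ((2 * a ^ (2⁻¹ : ℝ) * b1 ^ (2⁻¹ : ℝ)) ^ (2⁻¹ : ℝ) *
         (2 * a ^ (2⁻¹ : ℝ) * b2 ^ (2⁻¹ : ℝ)) ^ (2⁻¹ : ℝ))) :
    a ^ ((1 : ℝ)/6) ≤ 2 / Real.sqrt 3 * (b0 + b1 + b2) ^ ((1 : ℝ)/2) := by
  have hs : (0 : ℝ) ≤ b0 + b1 + b2 := by linarith
  have hsqrt3 : (0 : ℝ) < Real.sqrt 3 := Real.sqrt_pos.mpr (by norm_num)
  have hrhs : (0 : ℝ) ≤ 2 / Real.sqrt 3 * (b0 + b1 + b2) ^ ((1 : ℝ)/2) := by positivity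
  rcases eq_or_lt_of_le ha with rfl | ha'
  · rw [Real.zero_rpow (by norm_num)]
    exact hrhs
  -- square root helper
  have hsq : ∀ {c : ℝ}, 0 ≤ c → (c ^ (2⁻¹ : ℝ)) ^ (2 : ℕ) = c := by
    intro c hc
    rw [← Real.rpow_natCast (c ^ (2⁻¹ : ℝ)) 2, ← Real.rpow_mul hc]
    norm_num
  have hq : ∀ {c : ℝ}, 0 ≤ c → (c ^ (2⁻¹ : ℝ)) ^ (4 : ℕ) = c ^ (2 : ℕ) := by
    intro c hc
    rw [← Real.rpow_natCast (c ^ (2⁻¹ : ℝ)) 4, ← Real.rpow_mul hc, ← Real.rpow_natCast c 2]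
    norm_num
  -- fourth power of the hypothesis
  have hfac : ∀ {b : ℝ}, 0 ≤ b →
      ((2 * a ^ (2⁻¹ : ℝ) * b ^ (2⁻¹ : ℝ)) ^ (2⁻¹ : ℝ)) ^ (4 : ℕ) = 4 * a * b := by
    intro b hb
    have h2ab : (0 : ℝ) ≤ 2 * a ^ (2⁻¹ : ℝ) * b ^ (2⁻¹ : ℝ) := by positivity
    rw [hq h2ab]
    have : (2 * a ^ (2⁻¹ : ℝ) * b ^ (2⁻¹ : ℝ)) ^ (2 : ℕ) =
        4 * ((a ^ (2⁻¹ : ℝ)) ^ (2 : ℕ)) * ((b ^ (2⁻¹ : ℝ)) ^ (2 : ℕ)) := by ring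
    rw [this, hsq ha, hsq hb]
  have h4 : a ^ (4 : ℕ) ≤ 64 * a ^ (3 : ℕ) * (b0 * b1 * b2) := by
    have hR : a ^ (4 : ℕ) ≤ ((2 * a ^ (2⁻¹ : ℝ) * b0 ^ (2⁻¹ : ℝ)) ^ (2⁻¹ : ℝ) *
        ((2 * a ^ (2⁻¹ : ℝ) * b1 ^ (2⁻¹ : ℝ)) ^ (2⁻¹ : ℝ) *
         (2 * a ^ (2⁻¹ : ℝ) * b2 ^ (2⁻¹ : ℝ)) ^ (2⁻¹ : ℝ))) ^ (4 : ℕ) :=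
      pow_le_pow_left₀ ha h 4
    calc a ^ (4 : ℕ) ≤ _ := hR
      _ = ((2 * a ^ (2⁻¹ : ℝ) * b0 ^ (2⁻¹ : ℝ)) ^ (2⁻¹ : ℝ)) ^ (4 : ℕ) *
          (((2 * a ^ (2⁻¹ : ℝ) * b1 ^ (2⁻¹ : ℝ)) ^ (2⁻¹ : ℝ)) ^ (4 : ℕ) *
           ((2 * a ^ (2⁻¹ : ℝ) * b2 ^ (2⁻¹ : ℝ)) ^ (2⁻¹ : ℝ)) ^ (4 : ℕ)) := by ring
      _ = (4 * a * b0) * ((4 * a * b1) * (4 * a * b2)) := by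
          rw [hfac hb0, hfac hb1, hfac hb2]
      _ = 64 * a ^ (3 : ℕ) * (b0 * b1 * b2) := by ring
  have h64 : a ≤ 64 * (b0 * b1 * b2) := by
    nlinarith [pow_pos ha' 3, pow_pos ha' 4]
  have hamgm : b0 * b1 * b2 ≤ (b0 + b1 + b2) ^ (3 : ℕ) / 27 := by
    nlinarith [sq_nonneg (b0 - b1), sq_nonneg (b1 - b2), sq_nonneg (b0 - b2),
      mul_nonneg hb0 hb1, mul_nonneg hb1 hb2, mul_nonneg hb0 hb2]
  set c : ℝ := 2 / Real.sqrt 3 * (b0 + b1 + b2) ^ ((1 : ℝ)/2) with hc_def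
  have hc6 : c ^ (6 : ℕ) = 64 * (b0 + b1 + b2) ^ (3 : ℕ) / 27 := by
    have h1 : ((b0 + b1 + b2) ^ ((1 : ℝ)/2)) ^ (6 : ℕ) = (b0 + b1 + b2) ^ (3 : ℕ) := by
      rw [← Real.rpow_natCast ((b0 + b1 + b2) ^ ((1 : ℝ)/2)) 6, ← Real.rpow_mul hs,
        ← Real.rpow_natCast (b0 + b1 + b2) 3]
      norm_num
    have h2 : (Real.sqrt 3) ^ (6 : ℕ) = 27 := by
      have : (Real.sqrt 3) ^ (6 : ℕ) = ((Real.sqrt 3) ^ (2 : ℕ)) ^ (3 : ℕ) := by ring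
      rw [this, Real.sq_sqrt (by norm_num : (0:ℝ) ≤ 3)]
      norm_num
    rw [hc_def, mul_pow, div_pow, h1, h2]
    ring
  have hac6 : a ≤ c ^ (6 : ℕ) := by
    rw [hc6]
    calc a ≤ 64 * (b0 * b1 * b2) := h64
      _ ≤ 64 * ((b0 + b1 + b2) ^ (3 : ℕ) / 27) := by linarith
      _ = 64 * (b0 + b1 + b2) ^ (3 : ℕ) / 27 := by ring
  calc a ^ ((1 : ℝ)/6) ≤ (c ^ (6 : ℕ)) ^ ((1 : ℝ)/6) :=
        Real.rpow_le_rpow ha hac6 (by norm_num)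
    _ = c := by
        rw [← Real.rpow_natCast c 6, ← Real.rpow_mul hrhs]
        norm_num

end LadyzhenskayaAux

/-- The Sobolev (Ladyzhenskaya) inequality in three dimensions with the
constant `2/√3`: `‖u‖_{L⁶(ℝ³)} ≤ (2/√3)·‖∇u‖_{L²(ℝ³)}` for compactly supported
`C¹` vector fields on `ℝ³`, where `‖∇u‖_{L²}` is the `L²` norm of the full
(Frobenius) gradient. -/
theorem ladyzhenskaya_L6_dim3
    (u : EuclideanSpace ℝ (Fin 3) → EuclideanSpace ℝ (Fin 3))
    (hu : ContDiff ℝ 1 u) (hus : HasCompactSupport u) :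
    (∫ x, ‖u x‖ ^ 6) ^ ((1 : ℝ) / 6) ≤
      (2 / Real.sqrt 3) *
        (∫ x, ∑ i, ∑ k, (fderiv ℝ u x (EuclideanSpace.single i (1 : ℝ)) k) ^ 2) ^
          ((1 : ℝ) / 2) := by
  classical
  -- Identify the domain with `Fin 3 → ℝ` (as a measure space, they agree).
  set φ : (Fin 3 → ℝ) ≃L[ℝ] EuclideanSpace ℝ (Fin 3) :=
    (EuclideanSpace.equiv (Fin 3) ℝ).symm with hφ_def
  set U : (Fin 3 → ℝ) → EuclideanSpace ℝ (Fin 3) := fun y => u (φ y) with hU_def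
  have hU : ContDiff ℝ 1 U := hu.comp φ.contDiff
  have hUs : HasCompactSupport U := hus.comp_homeomorph φ.toHomeomorph
  have hUd : Differentiable ℝ U := hU.differentiable one_ne_zero
  set D : Fin 3 → (Fin 3 → ℝ) → EuclideanSpace ℝ (Fin 3) :=
    fun i y => fderiv ℝ U y (Pi.single i 1) with hD_def
  have hDcont : ∀ i, Continuous (D i) := fun i =>
    (hU.continuous_fderiv one_ne_zero).clm_apply continuous_const
  set A : ℝ≥0∞ := ∫⁻ y, ((‖U y‖₊ : ℝ≥0∞)) ^ (6 : ℕ) with hA_def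
  set B : Fin 3 → ℝ≥0∞ := fun i => ∫⁻ y, ((‖D i y‖₊ : ℝ≥0∞)) ^ (2 : ℕ) with hB_def
  -- the auxiliary scalar function `v = ‖u‖⁴`
  set w : (Fin 3 → ℝ) → ℝ := fun y => ‖U y‖ ^ 2 with hw_def
  set v : (Fin 3 → ℝ) → ℝ := fun y => w y * w y with hv_def
  have hw : ContDiff ℝ 1 w := hU.norm_sq (𝕜 := ℝ)
  have hv : ContDiff ℝ 1 v := hw.mul hw
  have hvs : HasCompactSupport v :=
    hUs.comp_left (g := fun z : EuclideanSpace ℝ (Fin 3) => ‖z‖ ^ 2 * ‖z‖ ^ 2) (by simp)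
  -- bound on the derivative of v
  have hvderiv : ∀ (y : Fin 3 → ℝ) (e : Fin 3 → ℝ),
      ‖fderiv ℝ v y e‖ ≤ 4 * ‖U y‖ ^ 3 * ‖fderiv ℝ U y e‖ := by
    intro y e
    have h1 : HasFDerivAt (fun z => ‖U z‖ ^ 2) (2 • (innerSL ℝ (U y)).comp (fderiv ℝ U y)) y :=
      (hUd y).hasFDerivAt.norm_sq
    have h2 : HasFDerivAt v
        (w y • (2 • (innerSL ℝ (U y)).comp (fderiv ℝ U y)) +
         w y • (2 • (innerSL ℝ (U y)).comp (fderiv ℝ U y))) y := h1.mul h1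
    have happ : fderiv ℝ v y e
        = 2 * (‖U y‖ ^ 2 * (2 * (inner ℝ (U y) (fderiv ℝ U y e) : ℝ))) := by
      rw [h2.fderiv]
      simp only [ContinuousLinearMap.add_apply, ContinuousLinearMap.smul_apply,
        ContinuousLinearMap.comp_apply, innerSL_apply_apply, smul_eq_mul, hw_def]
      ring
    rw [happ, Real.norm_eq_abs]
    have h3 : |2 * (‖U y‖ ^ 2 * (2 * (inner ℝ (U y) (fderiv ℝ U y e) : ℝ)))|
        = 4 * ‖U y‖ ^ 2 * |(inner ℝ (U y) (fderiv ℝ U y e) : ℝ)| := by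
      rw [abs_mul, abs_mul, abs_mul]
      rw [abs_of_nonneg (by positivity : (0:ℝ) ≤ ‖U y‖ ^ 2)]
      norm_num
      ring
    rw [h3]
    have hin := abs_real_inner_le_norm (U y) (fderiv ℝ U y e)
    nlinarith [sq_nonneg (‖U y‖), norm_nonneg (U y), norm_nonneg (fderiv ℝ U y e),
      abs_nonneg (inner ℝ (U y) (fderiv ℝ U y e) : ℝ)]
  -- the coordinate functions for the Loomis–Whitney inequality
  set f : Fin 3 → (Fin 3 → ℝ) → ℝ≥0∞ :=
    fun i y => 2⁻¹ * (‖fderiv ℝ v y (Pi.single i 1)‖₊ : ℝ≥0∞) with hf_def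
  have hfd : Continuous (fderiv ℝ v) := hv.continuous_fderiv one_ne_zero
  have hfm : ∀ i, Measurable (f i) := fun i =>
    ((hfd.clm_apply continuous_const).measurable.nnnorm.coe_nnreal_ennreal).const_mul _
  -- pointwise FTC bound
  have hpoint : ∀ (x : Fin 3 → ℝ) (i : Fin 3),
      ((‖U x‖₊ : ℝ≥0∞)) ^ (4 : ℕ) ≤ ∫⁻ t, f i (Function.update x i t) := by
    intro x i
    set ψ : ℝ → ℝ := fun t => v (Function.update x i t) with hψ_def
    have hψ : ContDiff ℝ 1 ψ := hv.comp (contDiff_update 1 x i)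
    have hψs : HasCompactSupport ψ := hvs.comp_isClosedEmbedding (isClosedEmbedding_update x i)
    have hkey := ladyzhenskaya_ftc hψ hψs (x i)
    have hver : ∀ t, deriv ψ t = fderiv ℝ v (Function.update x i t) (Pi.single i 1) := by
      intro t
      have hcomp : deriv ψ t = fderiv ℝ v (Function.update x i t) (deriv (Function.update x i) t) :=
        fderiv_comp_deriv _ ((hv.differentiable one_ne_zero).differentiableAt)
          (hasDerivAt_update x i t).differentiableAt
      rw [hcomp, deriv_update]
    have hψx : ψ (x i) = v x := by rw [hψ_def]; simp [Function.update_eq_self]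
    have hnv : ((‖v x‖₊ : ℝ≥0∞)) = ((‖U x‖₊ : ℝ≥0∞)) ^ (4 : ℕ) := by
      have hvx : v x = ‖U x‖ ^ 4 := by rw [hv_def, hw_def]; ring
      rw [hvx, nnnorm_pow, nnnorm_norm, ENNReal.coe_pow]
    have hmeasd : Measurable fun t => (‖deriv ψ t‖₊ : ℝ≥0∞) :=
      (hψ.continuous_deriv le_rfl).measurable.nnnorm.coe_nnreal_ennreal
    have h2' : ((‖v x‖₊ : ℝ≥0∞)) ≤ 2⁻¹ * ∫⁻ t, (‖deriv ψ t‖₊ : ℝ≥0∞) := by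
      have h0 : ((‖v x‖₊ : ℝ≥0∞)) = 2⁻¹ * (2 * (‖ψ (x i)‖₊ : ℝ≥0∞)) := by
        rw [← mul_assoc, ENNReal.inv_mul_cancel (by norm_num) (by norm_num), one_mul, hψx]
      rw [h0]
      exact mul_le_mul_right hkey 2⁻¹
    calc ((‖U x‖₊ : ℝ≥0∞)) ^ (4 : ℕ) = ((‖v x‖₊ : ℝ≥0∞)) := hnv.symm
      _ ≤ 2⁻¹ * ∫⁻ t, (‖deriv ψ t‖₊ : ℝ≥0∞) := h2'
      _ = ∫⁻ t, 2⁻¹ * (‖deriv ψ t‖₊ : ℝ≥0∞) := (lintegral_const_mul _ hmeasd).symm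
      _ = ∫⁻ t, f i (Function.update x i t) := by
          apply lintegral_congr fun t => ?_
          rw [hf_def]
          simp only
          rw [← hver t]
  -- finiteness
  have hAfin : A ≠ ⊤ := by
    have hcont : Continuous fun y : Fin 3 → ℝ => ‖U y‖ ^ (6 : ℕ) := hU.continuous.norm.pow 6
    have hsupp : HasCompactSupport fun y : Fin 3 → ℝ => ‖U y‖ ^ (6 : ℕ) :=
      hUs.comp_left (g := fun z : EuclideanSpace ℝ (Fin 3) => ‖z‖ ^ (6:ℕ)) (by simp)
    have hint : Integrable (fun y : Fin 3 → ℝ => ‖U y‖ ^ (6 : ℕ)) :=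
      hcont.integrable_of_hasCompactSupport hsupp
    have hAeq : A = ∫⁻ y, (‖(‖U y‖ ^ (6:ℕ))‖₊ : ℝ≥0∞) := by
      apply lintegral_congr fun y => ?_
      rw [nnnorm_pow, nnnorm_norm, ENNReal.coe_pow]
    rw [hAeq]
    exact hint.hasFiniteIntegral.ne
  have hBfin : ∀ i, B i ≠ ⊤ := by
    intro i
    have hcont : Continuous fun y : Fin 3 → ℝ => ‖D i y‖ ^ (2 : ℕ) := (hDcont i).norm.pow 2
    have hsupp : HasCompactSupport fun y : Fin 3 → ℝ => ‖D i y‖ ^ (2 : ℕ) :=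
      (hUs.fderiv ℝ).comp_left
        (g := fun L : (Fin 3 → ℝ) →L[ℝ] EuclideanSpace ℝ (Fin 3) => ‖L (Pi.single i 1)‖ ^ (2:ℕ))
        (by simp)
    have hint : Integrable (fun y : Fin 3 → ℝ => ‖D i y‖ ^ (2 : ℕ)) :=
      hcont.integrable_of_hasCompactSupport hsupp
    have hBeq : B i = ∫⁻ y, (‖(‖D i y‖ ^ (2:ℕ))‖₊ : ℝ≥0∞) := by
      apply lintegral_congr fun y => ?_
      rw [nnnorm_pow, nnnorm_norm, ENNReal.coe_pow]
    rw [hBeq]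
    exact hint.hasFiniteIntegral.ne
  -- rpow gymnastics helpers
  have hc3 : ∀ c : ℝ≥0∞, (c ^ (6:ℕ)) ^ (2⁻¹:ℝ) = c ^ (3:ℕ) := fun c => by
    rw [← ENNReal.rpow_natCast c 6, ← ENNReal.rpow_mul, ← ENNReal.rpow_natCast c 3]
    norm_num
  have hd1 : ∀ d : ℝ≥0∞, (d ^ (2:ℕ)) ^ (2⁻¹:ℝ) = d := fun d => by
    rw [← ENNReal.rpow_natCast d 2, ← ENNReal.rpow_mul]
    norm_num
  -- Hölder bound on ∫ f i
  have hholder : ∀ i, (∫⁻ y, f i y) ≤ 2 * A ^ (2⁻¹ : ℝ) * (B i) ^ (2⁻¹ : ℝ) := by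
    intro i
    have hbound : ∀ y, f i y ≤
        2 * ((((‖U y‖₊ : ℝ≥0∞)) ^ (6:ℕ)) ^ (2⁻¹ : ℝ) * (((‖D i y‖₊ : ℝ≥0∞)) ^ (2:ℕ)) ^ (2⁻¹ : ℝ)) := by
      intro y
      have h1 : (‖fderiv ℝ v y (Pi.single i 1)‖₊ : ℝ≥0∞) ≤
          4 * ((‖U y‖₊ : ℝ≥0∞) ^ (3:ℕ) * (‖D i y‖₊ : ℝ≥0∞)) := by
        rw [← ofReal_norm_eq_coe_nnnorm]
        have h3 : (4 : ℝ≥0∞) * ((‖U y‖₊ : ℝ≥0∞) ^ (3:ℕ) * (‖D i y‖₊ : ℝ≥0∞))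
            = ENNReal.ofReal (4 * ‖U y‖ ^ 3 * ‖D i y‖) := by
          rw [ENNReal.ofReal_mul (by positivity), ENNReal.ofReal_mul (by positivity),
            ENNReal.ofReal_pow (norm_nonneg _)]
          rw [ofReal_norm_eq_coe_nnnorm, ofReal_norm_eq_coe_nnnorm]
          rw [ENNReal.ofReal_ofNat]
          ring
        rw [h3]
        exact ENNReal.ofReal_le_ofReal (hvderiv y (Pi.single i 1))
      calc f i y = 2⁻¹ * (‖fderiv ℝ v y (Pi.single i 1)‖₊ : ℝ≥0∞) := by rw [hf_def]
        _ ≤ 2⁻¹ * (4 * ((‖U y‖₊ : ℝ≥0∞) ^ (3:ℕ) * (‖D i y‖₊ : ℝ≥0∞))) := mul_le_mul_right h1 _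
        _ = 2 * ((‖U y‖₊ : ℝ≥0∞) ^ (3:ℕ) * (‖D i y‖₊ : ℝ≥0∞)) := by
            rw [← mul_assoc]
            congr 1
            rw [show (4:ℝ≥0∞) = 2 * 2 by norm_num, ← mul_assoc,
              ENNReal.inv_mul_cancel (by norm_num) (by norm_num), one_mul]
        _ = 2 * ((((‖U y‖₊ : ℝ≥0∞)) ^ (6:ℕ)) ^ (2⁻¹ : ℝ) *
            (((‖D i y‖₊ : ℝ≥0∞)) ^ (2:ℕ)) ^ (2⁻¹ : ℝ)) := by
            rw [hc3, hd1]
    have hmeas1 : Measurable fun y : Fin 3 → ℝ => ((‖U y‖₊ : ℝ≥0∞)) ^ (6:ℕ) :=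
      (hU.continuous.measurable.nnnorm.coe_nnreal_ennreal).pow_const _
    have hmeas2 : Measurable fun y : Fin 3 → ℝ => ((‖D i y‖₊ : ℝ≥0∞)) ^ (2:ℕ) :=
      ((hDcont i).measurable.nnnorm.coe_nnreal_ennreal).pow_const _
    calc ∫⁻ y, f i y ≤ ∫⁻ y,
          2 * ((((‖U y‖₊ : ℝ≥0∞)) ^ (6:ℕ)) ^ (2⁻¹ : ℝ) *
               (((‖D i y‖₊ : ℝ≥0∞)) ^ (2:ℕ)) ^ (2⁻¹ : ℝ)) := lintegral_mono hbound
      _ = 2 * ∫⁻ y, (((‖U y‖₊ : ℝ≥0∞)) ^ (6:ℕ)) ^ (2⁻¹ : ℝ) *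
               (((‖D i y‖₊ : ℝ≥0∞)) ^ (2:ℕ)) ^ (2⁻¹ : ℝ) :=
          lintegral_const_mul _ ((hmeas1.pow_const _).mul (hmeas2.pow_const _))
      _ ≤ 2 * (A ^ (2⁻¹ : ℝ) * (B i) ^ (2⁻¹ : ℝ)) := by
          gcongr
          exact ENNReal.lintegral_mul_norm_pow_le hmeas1.aemeasurable hmeas2.aemeasurable
            (by norm_num) (by norm_num) (by norm_num)
      _ = 2 * A ^ (2⁻¹ : ℝ) * (B i) ^ (2⁻¹ : ℝ) := by ring
  -- main chain
  have hmain : A ≤ (2 * A ^ (2⁻¹:ℝ) * (B 0) ^ (2⁻¹:ℝ)) ^ (2⁻¹:ℝ) *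
      ((2 * A ^ (2⁻¹:ℝ) * (B 1) ^ (2⁻¹:ℝ)) ^ (2⁻¹:ℝ) *
       (2 * A ^ (2⁻¹:ℝ) * (B 2) ^ (2⁻¹:ℝ)) ^ (2⁻¹:ℝ)) := by
    have h1 : ∀ x : Fin 3 → ℝ, ((‖U x‖₊ : ℝ≥0∞)) ^ (6 : ℕ)
        = ∏ i : Fin 3, (((‖U x‖₊ : ℝ≥0∞)) ^ (4:ℕ)) ^ (2⁻¹ : ℝ) := by
      intro x
      have h2 : (((‖U x‖₊ : ℝ≥0∞)) ^ (4:ℕ)) ^ (2⁻¹ : ℝ) = ((‖U x‖₊ : ℝ≥0∞)) ^ (2:ℕ) := by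
        rw [← ENNReal.rpow_natCast _ 4, ← ENNReal.rpow_mul, ← ENNReal.rpow_natCast _ 2]
        norm_num
      rw [Fin.prod_univ_three, h2]
      ring
    calc A = ∫⁻ x, ∏ i : Fin 3, (((‖U x‖₊ : ℝ≥0∞)) ^ (4:ℕ)) ^ (2⁻¹ : ℝ) := by
          rw [hA_def]; exact lintegral_congr h1
      _ ≤ ∫⁻ x, ∏ i : Fin 3, (∫⁻ t, f i (Function.update x i t)) ^ (2⁻¹ : ℝ) := by
          refine lintegral_mono fun x => Finset.prod_le_prod' fun i _ => ?_
          exact ENNReal.rpow_le_rpow (hpoint x i) (by norm_num)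
      _ ≤ ∏ i : Fin 3, (∫⁻ y, f i y) ^ (2⁻¹ : ℝ) :=
          ladyzhenskaya_lw3 (fun _ => volume) f hfm
      _ ≤ (2 * A ^ (2⁻¹:ℝ) * (B 0) ^ (2⁻¹:ℝ)) ^ (2⁻¹:ℝ) *
          ((2 * A ^ (2⁻¹:ℝ) * (B 1) ^ (2⁻¹:ℝ)) ^ (2⁻¹:ℝ) *
           (2 * A ^ (2⁻¹:ℝ) * (B 2) ^ (2⁻¹:ℝ)) ^ (2⁻¹:ℝ)) := by
          rw [Fin.prod_univ_three, mul_assoc]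
          have hmono : ∀ i, (∫⁻ y, f i y) ^ (2⁻¹:ℝ) ≤
              (2 * A ^ (2⁻¹:ℝ) * (B i) ^ (2⁻¹:ℝ)) ^ (2⁻¹:ℝ) :=
            fun i => ENNReal.rpow_le_rpow (hholder i) (by norm_num)
          exact mul_le_mul' (hmono 0) (mul_le_mul' (hmono 1) (hmono 2))
  -- pass to real numbers
  have hterm_fin : ∀ i, (2 * A ^ (2⁻¹:ℝ) * (B i) ^ (2⁻¹:ℝ)) ^ (2⁻¹:ℝ) ≠ ⊤ := by
    intro i
    apply ENNReal.rpow_ne_top_of_nonneg (by norm_num)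
    exact ENNReal.mul_ne_top (ENNReal.mul_ne_top (by norm_num)
      (ENNReal.rpow_ne_top_of_nonneg (by norm_num) hAfin))
      (ENNReal.rpow_ne_top_of_nonneg (by norm_num) (hBfin i))
  have hrhs_fin : (2 * A ^ (2⁻¹:ℝ) * (B 0) ^ (2⁻¹:ℝ)) ^ (2⁻¹:ℝ) *
      ((2 * A ^ (2⁻¹:ℝ) * (B 1) ^ (2⁻¹:ℝ)) ^ (2⁻¹:ℝ) *
       (2 * A ^ (2⁻¹:ℝ) * (B 2) ^ (2⁻¹:ℝ)) ^ (2⁻¹:ℝ)) ≠ ⊤ :=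
    ENNReal.mul_ne_top (hterm_fin 0) (ENNReal.mul_ne_top (hterm_fin 1) (hterm_fin 2))
  have hterm_toReal : ∀ i, ((2 * A ^ (2⁻¹:ℝ) * (B i) ^ (2⁻¹:ℝ)) ^ (2⁻¹:ℝ)).toReal
      = (2 * A.toReal ^ (2⁻¹:ℝ) * (B i).toReal ^ (2⁻¹:ℝ)) ^ (2⁻¹:ℝ) := by
    intro i
    rw [← ENNReal.toReal_rpow, ENNReal.toReal_mul, ENNReal.toReal_mul,
      ← ENNReal.toReal_rpow, ← ENNReal.toReal_rpow]
    norm_num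
  have hreal : A.toReal ≤ (2 * A.toReal ^ (2⁻¹:ℝ) * (B 0).toReal ^ (2⁻¹:ℝ)) ^ (2⁻¹:ℝ) *
      ((2 * A.toReal ^ (2⁻¹:ℝ) * (B 1).toReal ^ (2⁻¹:ℝ)) ^ (2⁻¹:ℝ) *
       (2 * A.toReal ^ (2⁻¹:ℝ) * (B 2).toReal ^ (2⁻¹:ℝ)) ^ (2⁻¹:ℝ)) := by
    have := ENNReal.toReal_mono hrhs_fin hmain
    rwa [ENNReal.toReal_mul, ENNReal.toReal_mul, hterm_toReal 0, hterm_toReal 1,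
      hterm_toReal 2] at this
  -- identify the statement's integrals with `A.toReal` and `(B i).toReal`
  have hmp := EuclideanSpace.volume_preserving_symm_measurableEquiv_toLp (Fin 3)
  have hLHS : (∫ x, ‖u x‖ ^ 6) = A.toReal := by
    have hnn : 0 ≤ᵐ[volume] fun x : EuclideanSpace ℝ (Fin 3) => ‖u x‖ ^ 6 :=
      Filter.Eventually.of_forall fun x => by positivity
    have hmeas : AEStronglyMeasurable (fun x : EuclideanSpace ℝ (Fin 3) => ‖u x‖ ^ 6) volume :=
      (hu.continuous.norm.pow 6).aestronglyMeasurable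
    rw [integral_eq_lintegral_of_nonneg_ae hnn hmeas]
    congr 1
    have htrans : (∫⁻ x : EuclideanSpace ℝ (Fin 3), ENNReal.ofReal (‖u x‖ ^ 6))
        = ∫⁻ y : Fin 3 → ℝ, ENNReal.ofReal (‖U y‖ ^ 6) :=
      hmp.lintegral_comp (hU.continuous.norm.pow 6).measurable.ennreal_ofReal
    rw [htrans, hA_def]
    apply lintegral_congr fun y => ?_
    rw [ENNReal.ofReal_pow (norm_nonneg _), ofReal_norm_eq_coe_nnnorm]
  have hDeq : ∀ i (y : Fin 3 → ℝ),
      D i y = fderiv ℝ u (φ y) (EuclideanSpace.single i (1:ℝ)) := by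
    intro i y
    have hcomp : fderiv ℝ U y = (fderiv ℝ u (φ y)).comp (φ : (Fin 3 → ℝ) →L[ℝ] _) := by
      rw [hU_def]
      rw [show (fun y => u (φ y)) = u ∘ φ from rfl]
      rw [fderiv_comp y ((hu.differentiable one_ne_zero) _) φ.differentiableAt, φ.fderiv]
    rw [hD_def]
    simp only [hcomp, ContinuousLinearMap.comp_apply]
    rfl
  have hBint : ∀ i, (∫ x, ‖fderiv ℝ u x (EuclideanSpace.single i (1:ℝ))‖ ^ 2) = (B i).toReal := by
    intro i
    have hcont : Continuous fun x : EuclideanSpace ℝ (Fin 3) =>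
        ‖fderiv ℝ u x (EuclideanSpace.single i (1:ℝ))‖ ^ 2 :=
      (((hu.continuous_fderiv one_ne_zero).clm_apply continuous_const).norm.pow 2)
    have hnn : 0 ≤ᵐ[volume] fun x : EuclideanSpace ℝ (Fin 3) =>
        ‖fderiv ℝ u x (EuclideanSpace.single i (1:ℝ))‖ ^ 2 :=
      Filter.Eventually.of_forall fun x => by positivity
    rw [integral_eq_lintegral_of_nonneg_ae hnn hcont.aestronglyMeasurable]
    congr 1
    have htrans : (∫⁻ x : EuclideanSpace ℝ (Fin 3),
          ENNReal.ofReal (‖fderiv ℝ u x (EuclideanSpace.single i (1:ℝ))‖ ^ 2))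
        = ∫⁻ y : Fin 3 → ℝ, ENNReal.ofReal (‖fderiv ℝ u (φ y) (EuclideanSpace.single i (1:ℝ))‖ ^ 2) :=
      hmp.lintegral_comp
        ((((hu.continuous_fderiv one_ne_zero).clm_apply continuous_const).norm.pow 2).comp
          φ.continuous).measurable.ennreal_ofReal
    rw [htrans, hB_def]
    apply lintegral_congr fun y => ?_
    rw [← hDeq i y, ENNReal.ofReal_pow (norm_nonneg _), ofReal_norm_eq_coe_nnnorm]
  have hRHS : (∫ x, ∑ i, ∑ k, (fderiv ℝ u x (EuclideanSpace.single i (1 : ℝ)) k) ^ 2)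
      = (B 0).toReal + (B 1).toReal + (B 2).toReal := by
    have hsq : ∀ (x : EuclideanSpace ℝ (Fin 3)) (i : Fin 3),
        (∑ k, (fderiv ℝ u x (EuclideanSpace.single i (1 : ℝ)) k) ^ 2)
        = ‖fderiv ℝ u x (EuclideanSpace.single i (1:ℝ))‖ ^ 2 := by
      intro x i
      rw [EuclideanSpace.norm_eq, Real.sq_sqrt (by positivity)]
      congr 1
      funext k
      rw [Real.norm_eq_abs, sq_abs]
    have hint : ∀ i : Fin 3, Integrable fun x : EuclideanSpace ℝ (Fin 3) =>
        ‖fderiv ℝ u x (EuclideanSpace.single i (1:ℝ))‖ ^ 2 := by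
      intro i
      apply Continuous.integrable_of_hasCompactSupport
      · exact ((hu.continuous_fderiv one_ne_zero).clm_apply continuous_const).norm.pow 2
      · exact (hus.fderiv ℝ).comp_left
          (g := fun L : EuclideanSpace ℝ (Fin 3) →L[ℝ] EuclideanSpace ℝ (Fin 3) =>
            ‖L (EuclideanSpace.single i (1:ℝ))‖ ^ 2) (by simp)
    calc (∫ x, ∑ i, ∑ k, (fderiv ℝ u x (EuclideanSpace.single i (1 : ℝ)) k) ^ 2)
        = ∫ x, ∑ i : Fin 3, ‖fderiv ℝ u x (EuclideanSpace.single i (1:ℝ))‖ ^ 2 := by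
          apply integral_congr_ae
          exact Filter.Eventually.of_forall fun x => Finset.sum_congr rfl fun i _ => hsq x i
      _ = ∑ i : Fin 3, ∫ x, ‖fderiv ℝ u x (EuclideanSpace.single i (1:ℝ))‖ ^ 2 :=
          integral_finset_sum _ fun i _ => hint i
      _ = (B 0).toReal + (B 1).toReal + (B 2).toReal := by
          rw [Fin.sum_univ_three, hBint 0, hBint 1, hBint 2]
  rw [hLHS, hRHS]
  exact ladyzhenskaya_algebra ENNReal.toReal_nonneg ENNReal.toReal_nonneg
    ENNReal.toReal_nonneg ENNReal.toReal_nonneg hreal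
end
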